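/- arXiv:2303.10069 — 7 statements merged into one kernel-verified Lean document; each statement's English description precedes it below -/
import Mathlib

section
/- Let M ≥ 1 and let u, v ∈ ℝ^M. Then the supremum over all c ∈ ℝ^M with ‖c‖ = 1 of |⟨c,u⟩ + i⟨c,v⟩| equals sqrt( ( ‖u‖² + ‖v‖² + sqrt( (‖u‖² − ‖v‖²)² + 4⟨u,v⟩² ) ) / 2 ). -/
set_option maxHeartbeats 1000000 in
/-- For `M ≥ 1` and `u, v ∈ ℝ^M`, the supremum over unit vectors `c` of
`|⟨c,u⟩ + i⟨c,v⟩|` equals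
`sqrt(((‖u‖² + ‖v‖²) + sqrt((‖u‖² − ‖v‖²)² + 4⟨u,v⟩²)) / 2)`. -/
theorem stmt0 (M : ℕ) (hM : 1 ≤ M) (u v : EuclideanSpace ℝ (Fin M)) :
    sSup {r : ℝ | ∃ c : EuclideanSpace ℝ (Fin M), ‖c‖ = 1 ∧
        r = ‖((inner ℝ c u : ℝ) : ℂ) + Complex.I * ((inner ℝ c v : ℝ) : ℂ)‖}
      = Real.sqrt ((‖u‖ ^ 2 + ‖v‖ ^ 2 +
          Real.sqrt ((‖u‖ ^ 2 - ‖v‖ ^ 2) ^ 2 + 4 * (inner ℝ u v : ℝ) ^ 2)) / 2) := by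
  set a : ℝ := ‖u‖ ^ 2 with ha
  set b : ℝ := ‖v‖ ^ 2 with hb
  set d : ℝ := (inner ℝ u v : ℝ) with hd
  set s : ℝ := Real.sqrt ((a - b) ^ 2 + 4 * d ^ 2) with hsdef
  set lam : ℝ := (a + b + s) / 2 with hlam
  have hs0 : (0:ℝ) ≤ (a - b) ^ 2 + 4 * d ^ 2 := by positivity
  have hs : s ^ 2 = (a - b) ^ 2 + 4 * d ^ 2 := Real.sq_sqrt hs0
  have hs_nonneg : 0 ≤ s := Real.sqrt_nonneg _
  have habs : |a - b| ≤ s := by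
    rw [hsdef, ← Real.sqrt_sq_eq_abs]
    exact Real.sqrt_le_sqrt (by nlinarith [sq_nonneg d])
  have hab := abs_le.mp habs
  have hA : a ≤ lam := by rw [hlam]; linarith [hab.1, hab.2]
  have hB : b ≤ lam := by rw [hlam]; linarith [hab.1, hab.2]
  have hd2 : (lam - a) * (lam - b) = d ^ 2 := by
    rw [hlam]; nlinarith [hs]
  have ha0 : (0:ℝ) ≤ a := by rw [ha]; positivity
  have hb0 : (0:ℝ) ≤ b := by rw [hb]; positivity
  have hlam0 : 0 ≤ lam := le_trans ha0 hA
  clear_value s lam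
  -- upper bound for all unit vectors
  have hub : ∀ c : EuclideanSpace ℝ (Fin M), ‖c‖ = 1 →
      (inner ℝ c u : ℝ) ^ 2 + (inner ℝ c v : ℝ) ^ 2 ≤ lam := by
    intro c hc
    set p : ℝ := (inner ℝ c u : ℝ) with hp
    set q : ℝ := (inner ℝ c v : ℝ) with hq
    set w : EuclideanSpace ℝ (Fin M) := p • u + q • v with hw
    have h1 : p ^ 2 + q ^ 2 = (inner ℝ c w : ℝ) := by
      rw [hw, inner_add_right, real_inner_smul_right, real_inner_smul_right,
        ← hp, ← hq]
      ring
    have h2 : (inner ℝ c w : ℝ) ≤ ‖c‖ * ‖w‖ := real_inner_le_norm c w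
    have hwn : ‖w‖ ^ 2 = a * p ^ 2 + 2 * d * p * q + b * q ^ 2 := by
      rw [← real_inner_self_eq_norm_sq, hw]
      simp only [inner_add_left, inner_add_right, real_inner_smul_left,
        real_inner_smul_right]
      rw [real_inner_comm u v, real_inner_self_eq_norm_sq,
        real_inner_self_eq_norm_sq, ← ha, ← hb, ← hd]
      ring
    have hquad : a * p ^ 2 + 2 * d * p * q + b * q ^ 2 ≤ lam * (p ^ 2 + q ^ 2) := by
      rcases eq_or_lt_of_le hA with hEq | hLt
      · have hdz : d = 0 := by
          have h0 : d ^ 2 = 0 := by rw [← hd2, ← hEq]; ring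
          exact pow_eq_zero_iff (n := 2) (by norm_num) |>.mp h0
        rw [hdz, ← hEq]
        nlinarith [sq_nonneg q, hB]
      · have key : (lam - a) * ((lam - a) * p ^ 2 - 2 * d * p * q + (lam - b) * q ^ 2)
            = ((lam - a) * p - d * q) ^ 2 := by linear_combination q ^ 2 * hd2
        have hQ : 0 ≤ (lam - a) * ((lam - a) * p ^ 2 - 2 * d * p * q + (lam - b) * q ^ 2) := by
          rw [key]; exact sq_nonneg _
        have hQ' : 0 ≤ (lam - a) * p ^ 2 - 2 * d * p * q + (lam - b) * q ^ 2 := by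
          nlinarith [hQ, hLt]
        nlinarith [hQ']
    have h3 : p ^ 2 + q ^ 2 ≤ ‖w‖ := by
      calc p ^ 2 + q ^ 2 = (inner ℝ c w : ℝ) := h1
        _ ≤ ‖c‖ * ‖w‖ := h2
        _ = ‖w‖ := by rw [hc, one_mul]
    have h4 : (p ^ 2 + q ^ 2) ^ 2 ≤ ‖w‖ ^ 2 := by
      have hnn : 0 ≤ p ^ 2 + q ^ 2 := by positivity
      exact pow_le_pow_left₀ hnn h3 2
    have h5 : (p ^ 2 + q ^ 2) ^ 2 ≤ lam * (p ^ 2 + q ^ 2) := by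
      calc (p ^ 2 + q ^ 2) ^ 2 ≤ ‖w‖ ^ 2 := h4
        _ = a * p ^ 2 + 2 * d * p * q + b * q ^ 2 := hwn
        _ ≤ lam * (p ^ 2 + q ^ 2) := hquad
    rcases eq_or_lt_of_le (by positivity : (0:ℝ) ≤ p ^ 2 + q ^ 2) with h | h
    · rw [← h]; exact hlam0
    · nlinarith [h5]
  -- attainment
  have hatt : ∃ c : EuclideanSpace ℝ (Fin M), ‖c‖ = 1 ∧
      (inner ℝ c u : ℝ) ^ 2 + (inner ℝ c v : ℝ) ^ 2 = lam := by
    by_cases hl : lam = 0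
    · have hau : a = 0 := le_antisymm (hl ▸ hA) ha0
      have hu0 : u = 0 := by
        have hn : ‖u‖ = 0 := by
          rw [ha] at hau; nlinarith [norm_nonneg u]
        exact norm_eq_zero.mp hn
      have hbv : b = 0 := le_antisymm (hl ▸ hB) hb0
      have hv0 : v = 0 := by
        have hn : ‖v‖ = 0 := by
          rw [hb] at hbv; nlinarith [norm_nonneg v]
        exact norm_eq_zero.mp hn
      refine ⟨EuclideanSpace.single ⟨0, hM⟩ 1, ?_, ?_⟩
      · simp [EuclideanSpace.norm_single]
      · simp [hu0, hv0, hl]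
    · have hlampos : 0 < lam := lt_of_le_of_ne hlam0 (Ne.symm hl)
      obtain ⟨p₀, q₀, hpq, e1, e2⟩ : ∃ p₀ q₀ : ℝ, 0 < p₀ ^ 2 + q₀ ^ 2 ∧
          a * p₀ + d * q₀ = lam * p₀ ∧ d * p₀ + b * q₀ = lam * q₀ := by
        by_cases hda : d = 0 ∧ lam = a
        · exact ⟨1, 0, by norm_num, by rw [hda.1, hda.2]; ring, by rw [hda.1]; ring⟩
        · refine ⟨d, lam - a, ?_, by ring, by linear_combination -hd2⟩
          rcases not_and_or.mp hda with h | h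
          · have hdp : 0 < d ^ 2 := by positivity
            nlinarith [sq_nonneg (lam - a)]
          · have hne : lam - a ≠ 0 := sub_ne_zero.mpr h
            have hdp : 0 < (lam - a) ^ 2 := by positivity
            nlinarith [sq_nonneg d]
      set w : EuclideanSpace ℝ (Fin M) := p₀ • u + q₀ • v with hw
      have hwu : (inner ℝ w u : ℝ) = lam * p₀ := by
        rw [hw, inner_add_left, real_inner_smul_left, real_inner_smul_left,
          real_inner_self_eq_norm_sq, real_inner_comm u v, ← ha, ← hd]
        linear_combination e1
      have hwv : (inner ℝ w v : ℝ) = lam * q₀ := by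
        rw [hw, inner_add_left, real_inner_smul_left, real_inner_smul_left,
          real_inner_self_eq_norm_sq, ← hb, ← hd]
        linear_combination e2
      have hwn : ‖w‖ ^ 2 = lam * (p₀ ^ 2 + q₀ ^ 2) := by
        rw [← real_inner_self_eq_norm_sq]
        have : (inner ℝ w w : ℝ) = p₀ * (inner ℝ w u : ℝ) + q₀ * (inner ℝ w v : ℝ) := by
          rw [hw]
          rw [inner_add_right, real_inner_smul_right, real_inner_smul_right]
        rw [this, hwu, hwv]
        ring
      have hwpos : 0 < ‖w‖ := by
        have h2 : 0 < ‖w‖ ^ 2 := by rw [hwn]; positivity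
        nlinarith [norm_nonneg w]
      refine ⟨‖w‖⁻¹ • w, ?_, ?_⟩
      · rw [norm_smul, norm_inv, norm_norm, inv_mul_cancel₀ (ne_of_gt hwpos)]
      · have hcu : (inner ℝ (‖w‖⁻¹ • w) u : ℝ) = ‖w‖⁻¹ * (lam * p₀) := by
          rw [real_inner_smul_left, hwu]
        have hcv : (inner ℝ (‖w‖⁻¹ • w) v : ℝ) = ‖w‖⁻¹ * (lam * q₀) := by
          rw [real_inner_smul_left, hwv]
        rw [hcu, hcv]
        have hwne : ‖w‖ ≠ 0 := ne_of_gt hwpos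
        field_simp
        nlinarith [hwn, hwpos]
  -- combine
  have hval : ∀ c : EuclideanSpace ℝ (Fin M),
      ‖((inner ℝ c u : ℝ) : ℂ) + Complex.I * ((inner ℝ c v : ℝ) : ℂ)‖
        = Real.sqrt ((inner ℝ c u : ℝ) ^ 2 + (inner ℝ c v : ℝ) ^ 2) := by
    intro c
    rw [mul_comm, Complex.norm_add_mul_I]
  apply le_antisymm
  · apply Real.sSup_le
    · rintro r ⟨c, hc, rfl⟩
      rw [hval c]
      exact Real.sqrt_le_sqrt (hub c hc)
    · exact Real.sqrt_nonneg _
  · obtain ⟨c, hc, hf⟩ := hatt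
    apply le_csSup
    · refine ⟨Real.sqrt lam, ?_⟩
      rintro r ⟨c', hc', rfl⟩
      rw [hval c']
      exact Real.sqrt_le_sqrt (hub c' hc')
    · exact ⟨c, hc, by rw [hval c, hf]⟩
end

section
/- Let m, n ≥ 1 and let X be a Hermitian complex matrix indexed by (Fin m × Fin n) × (Fin m × Fin n). Define the partial trace Y, an m×m complex matrix, by Y(i,j) = Σ_{k ∈ Fin n} X((i,k),(j,k)); then Y is Hermitian. The supremum, over all nonzero Hermitian m×m complex matrices A, of |tr((A ⊗ I_n) · X)| / ‖A‖_op equals the sum Σ_i |λ_i(Y)| of the absolute values of the eigenvalues of Y (i.e., the trace norm of Y). -/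
open Matrix Kronecker

private lemma trace_kron_eq (m n : ℕ)
    (X : Matrix (Fin m × Fin n) (Fin m × Fin n) ℂ)
    (Y : Matrix (Fin m) (Fin m) ℂ)
    (hY : ∀ i j, Y i j = ∑ k : Fin n, X (i, k) (j, k))
    (A : Matrix (Fin m) (Fin m) ℂ) :
    ((A ⊗ₖ (1 : Matrix (Fin n) (Fin n) ℂ)) * X).trace = (A * Y).trace := by
  simp only [Matrix.trace, Matrix.diag, Matrix.mul_apply, hY, Fintype.sum_prod_type,
    kroneckerMap_apply, Matrix.one_apply, mul_ite, mul_one, mul_zero, ite_mul, zero_mul,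
    Finset.sum_ite_eq, Finset.mem_univ, if_true, Finset.mul_sum]
  exact Finset.sum_congr rfl fun i _ => Finset.sum_comm

private lemma diag_entry_bound (m : ℕ) (U : Matrix.unitaryGroup (Fin m) ℂ)
    (A : Matrix (Fin m) (Fin m) ℂ) (i : Fin m) :
    ‖(star (U : Matrix (Fin m) (Fin m) ℂ) * A * U) i i‖
      ≤ ‖Matrix.toEuclideanCLM (𝕜 := ℂ) A‖ := by
  set u : Fin m → ℂ := fun j => (U : Matrix (Fin m) (Fin m) ℂ) j i with hu
  set x : EuclideanSpace ℂ (Fin m) := (WithLp.equiv 2 _).symm u with hx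
  have hTx : Matrix.toEuclideanCLM (𝕜 := ℂ) A x = (WithLp.equiv 2 _).symm (A.mulVec u) := by
    rw [hx]; rfl
  have hxx : (inner ℂ x x : ℂ) = 1 := by
    have h1 : (star (U : Matrix (Fin m) (Fin m) ℂ) * U) i i = 1 := by
      rw [Matrix.UnitaryGroup.star_mul_self]; simp [Matrix.one_apply]
    rw [← h1]
    simp [hx, PiLp.inner_apply, Matrix.mul_apply, Matrix.star_apply, hu, mul_comm,
      RCLike.inner_apply, -inner_self_eq_norm_sq_to_K]
  have hnx : ‖x‖ = 1 := by
    have := inner_self_eq_norm_sq_to_K (𝕜 := ℂ) x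
    rw [hxx] at this
    have h2 : (‖x‖ : ℂ)^2 = 1 := this.symm
    have : ‖x‖^2 = 1 := by exact_mod_cast h2
    nlinarith [norm_nonneg x]
  have hip : (inner ℂ x (Matrix.toEuclideanCLM (𝕜 := ℂ) A x) : ℂ)
      = (star (U : Matrix (Fin m) (Fin m) ℂ) * A * U) i i := by
    rw [hTx]
    simp only [hx, PiLp.inner_apply, RCLike.inner_apply, WithLp.equiv_symm_apply, PiLp.toLp_apply,
      Matrix.mulVec, dotProduct, Matrix.mul_apply, Matrix.star_apply]
    simp only [Finset.mul_sum, Finset.sum_mul]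
    rw [Finset.sum_comm]
    simp [hu, Complex.star_def, mul_comm, mul_assoc, mul_left_comm]
  have hb := norm_inner_le_norm (𝕜 := ℂ) x (Matrix.toEuclideanCLM (𝕜 := ℂ) A x)
  rw [hip] at hb
  calc ‖(star (U : Matrix (Fin m) (Fin m) ℂ) * A * U) i i‖
      ≤ ‖x‖ * ‖Matrix.toEuclideanCLM (𝕜 := ℂ) A x‖ := hb
    _ ≤ ‖x‖ * (‖Matrix.toEuclideanCLM (𝕜 := ℂ) A‖ * ‖x‖) := by
        gcongr; exact ContinuousLinearMap.le_opNorm _ _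
    _ = ‖Matrix.toEuclideanCLM (𝕜 := ℂ) A‖ := by rw [hnx]; ring

private lemma clm_norm_pos {m : ℕ} (A : Matrix (Fin m) (Fin m) ℂ) (hA : A ≠ 0) :
    0 < ‖Matrix.toEuclideanCLM (𝕜 := ℂ) A‖ := by
  rw [norm_pos_iff]
  intro h
  apply hA
  have hAeq : A = (Matrix.toEuclideanCLM (n := Fin m) (𝕜 := ℂ)).symm
      (Matrix.toEuclideanCLM (n := Fin m) (𝕜 := ℂ) A) :=
    (StarAlgEquiv.symm_apply_apply _ _).symm
  rw [hAeq, h, map_zero]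

private lemma core (m : ℕ) (hm : 1 ≤ m)
    (Y : Matrix (Fin m) (Fin m) ℂ)
    (U : Matrix.unitaryGroup (Fin m) ℂ)
    (lam : Fin m → ℝ)
    (hspec : Y = (U : Matrix (Fin m) (Fin m) ℂ) * Matrix.diagonal (fun i => (lam i : ℂ))
      * star (U : Matrix (Fin m) (Fin m) ℂ)) :
    sSup {r : ℝ | ∃ A : Matrix (Fin m) (Fin m) ℂ, A.IsHermitian ∧ A ≠ 0 ∧
        r = ‖(A * Y).trace‖ / ‖Matrix.toEuclideanCLM (𝕜 := ℂ) A‖}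
      = ∑ i, |lam i| := by
  have i0 : Fin m := ⟨0, hm⟩
  haveI : Nonempty (Fin m) := ⟨i0⟩
  set U' : Matrix (Fin m) (Fin m) ℂ := (U : Matrix (Fin m) (Fin m) ℂ) with hU'
  have hUU : star U' * U' = 1 := Matrix.UnitaryGroup.star_mul_self U
  have hUU' : U' * star U' = 1 := U.2.2
  set E : ℝ := ∑ i, |lam i| with hE
  have hEnonneg : 0 ≤ E := Finset.sum_nonneg fun i _ => abs_nonneg _
  have htrAY : ∀ A : Matrix (Fin m) (Fin m) ℂ,
      (A * Y).trace = ∑ i, (star U' * A * U') i i * (lam i : ℂ) := by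
    intro A
    rw [hspec]
    have key : U' * (star U' * A * U') = A * U' := by
      rw [← mul_assoc, ← mul_assoc, hUU', one_mul]
    have h1 : A * (U' * Matrix.diagonal (fun i => (lam i : ℂ)) * star U')
        = U' * ((star U' * A * U') * Matrix.diagonal (fun i => (lam i : ℂ))) * star U' := by
      calc A * (U' * Matrix.diagonal (fun i => (lam i : ℂ)) * star U')
          = (A * U') * Matrix.diagonal (fun i => (lam i : ℂ)) * star U' := by
            simp only [mul_assoc]
        _ = (U' * (star U' * A * U')) * Matrix.diagonal (fun i => (lam i : ℂ)) * star U' := by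
            rw [key]
        _ = U' * ((star U' * A * U') * Matrix.diagonal (fun i => (lam i : ℂ))) * star U' := by
            simp only [mul_assoc]
    rw [h1, Matrix.trace_mul_cycle, ← mul_assoc, hUU, one_mul]
    simp [Matrix.trace, Matrix.mul_diagonal]
  have hub : ∀ A : Matrix (Fin m) (Fin m) ℂ,
      ‖(A * Y).trace‖ ≤ ‖Matrix.toEuclideanCLM (𝕜 := ℂ) A‖ * E := by
    intro A
    rw [htrAY A]
    calc ‖∑ i, (star U' * A * U') i i * (lam i : ℂ)‖
        ≤ ∑ i, ‖(star U' * A * U') i i * (lam i : ℂ)‖ := by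
          simpa using norm_sum_le Finset.univ
            (fun i => (star U' * A * U') i i * (lam i : ℂ))
      _ ≤ ∑ i, ‖Matrix.toEuclideanCLM (𝕜 := ℂ) A‖ * |lam i| := by
          refine Finset.sum_le_sum fun i _ => ?_
          rw [norm_mul, Complex.norm_real, Real.norm_eq_abs]
          exact mul_le_mul_of_nonneg_right (diag_entry_bound m U A i) (abs_nonneg _)
      _ = ‖Matrix.toEuclideanCLM (𝕜 := ℂ) A‖ * E := by rw [hE, Finset.mul_sum]
  set s : Fin m → ℂ := fun i => if 0 ≤ lam i then 1 else -1 with hs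
  have hs_star : ∀ i, star (s i) = s i := by
    intro i; by_cases h : 0 ≤ lam i <;> simp [hs, h]
  have hs_sq : ∀ i, s i * s i = 1 := by
    intro i; by_cases h : 0 ≤ lam i <;> simp [hs, h]
  have hs_lam : ∀ i, s i * (lam i : ℂ) = (|lam i| : ℝ) := by
    intro i; by_cases h : 0 ≤ lam i
    · simp [hs, h, abs_of_nonneg h]
    · simp only [hs, h, if_false]
      rw [abs_of_neg (not_le.mp h)]
      push_cast; ring
  set A₀ : Matrix (Fin m) (Fin m) ℂ := U' * Matrix.diagonal s * star U' with hA₀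
  have hd : star (Matrix.diagonal s) = Matrix.diagonal s := by
    rw [Matrix.star_eq_conjTranspose, Matrix.diagonal_conjTranspose]
    exact congrArg Matrix.diagonal (funext hs_star)
  have hA₀herm : A₀.IsHermitian := by
    show star A₀ = A₀
    rw [hA₀, StarMul.star_mul, StarMul.star_mul, star_star, hd, mul_assoc]
  have hA₀sq : A₀ * A₀ = 1 := by
    rw [hA₀]
    have h1 : U' * Matrix.diagonal s * star U' * (U' * Matrix.diagonal s * star U')
        = U' * (Matrix.diagonal s * Matrix.diagonal s) * star U' := by
      have h2 : star U' * (U' * (Matrix.diagonal s * star U'))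
          = Matrix.diagonal s * star U' := by
        rw [← mul_assoc, hUU, one_mul]
      simp only [mul_assoc]
      rw [h2]
    rw [h1, Matrix.diagonal_mul_diagonal]
    have h3 : (fun i => s i * s i) = fun _ => (1 : ℂ) := funext fun i => hs_sq i
    rw [h3, Matrix.diagonal_one, mul_one, hUU']
  have hA₀ne : A₀ ≠ 0 := by
    intro h0
    have h1 : (1 : Matrix (Fin m) (Fin m) ℂ) i0 i0 = 0 := by
      rw [← hA₀sq, h0, mul_zero]
      rfl
    rw [Matrix.one_apply_eq] at h1
    exact one_ne_zero h1
  have hA₀norm : ‖Matrix.toEuclideanCLM (𝕜 := ℂ) A₀‖ = 1 := by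
    haveI : Nontrivial (EuclideanSpace ℂ (Fin m)) := by
      refine ⟨EuclideanSpace.single i0 1, 0, ?_⟩
      intro h
      have h2 : EuclideanSpace.single i0 (1:ℂ) i0 = 0 := by rw [h]; rfl
      rw [EuclideanSpace.single_apply] at h2
      simp at h2
    set T : EuclideanSpace ℂ (Fin m) →L[ℂ] EuclideanSpace ℂ (Fin m) :=
      Matrix.toEuclideanCLM (𝕜 := ℂ) A₀ with hT
    have hTstar : star T = T := by
      rw [hT, ← map_star]
      exact congrArg _ hA₀herm
    have hT2 : T * T = 1 := by
      rw [hT, ← _root_.map_mul, hA₀sq, _root_.map_one]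
    have hnorm : ‖T‖ * ‖T‖ = 1 := by
      have := CStarRing.norm_star_mul_self (x := T)
      rw [hTstar, hT2, norm_one] at this
      linarith
    nlinarith [norm_nonneg T]
  have htrA₀ : (A₀ * Y).trace = (E : ℂ) := by
    rw [htrAY A₀]
    have hdiag : star U' * A₀ * U' = Matrix.diagonal s := by
      rw [hA₀]
      have h4 : star U' * (U' * Matrix.diagonal s * star U') * U'
          = (star U' * U') * Matrix.diagonal s * (star U' * U') := by
        simp only [mul_assoc]
      rw [h4, hUU, one_mul, mul_one]
    rw [hdiag]
    simp only [Matrix.diagonal_apply_eq]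
    rw [hE]
    push_cast
    exact Finset.sum_congr rfl fun i _ => hs_lam i
  have hmem : E ∈ {r : ℝ | ∃ A : Matrix (Fin m) (Fin m) ℂ, A.IsHermitian ∧ A ≠ 0 ∧
      r = ‖(A * Y).trace‖ / ‖Matrix.toEuclideanCLM (𝕜 := ℂ) A‖} := by
    refine ⟨A₀, hA₀herm, hA₀ne, ?_⟩
    rw [htrA₀, hA₀norm, div_one, Complex.norm_real, Real.norm_eq_abs, abs_of_nonneg hEnonneg]
  have hub' : ∀ r ∈ {r : ℝ | ∃ A : Matrix (Fin m) (Fin m) ℂ, A.IsHermitian ∧ A ≠ 0 ∧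
      r = ‖(A * Y).trace‖ / ‖Matrix.toEuclideanCLM (𝕜 := ℂ) A‖}, r ≤ E := by
    rintro r ⟨A, hAh, hAne, rfl⟩
    have hTpos : 0 < ‖Matrix.toEuclideanCLM (𝕜 := ℂ) A‖ := clm_norm_pos A hAne
    rw [div_le_iff₀ hTpos]
    calc ‖(A * Y).trace‖ ≤ ‖Matrix.toEuclideanCLM (𝕜 := ℂ) A‖ * E := hub A
      _ = E * ‖Matrix.toEuclideanCLM (𝕜 := ℂ) A‖ := mul_comm _ _
  exact le_antisymm (csSup_le ⟨E, hmem⟩ hub') (le_csSup ⟨E, hub'⟩ hmem)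

/-- The seminorm relative to the subsystem algebra `L(H_S) ⊗ id` equals the trace norm
of the partial trace: for Hermitian `X` on `H_S ⊗ H_{S^c}`, with `Y` the partial trace
of `X` over the second factor, `Y` is Hermitian and
`sup_{A Hermitian, A ≠ 0} |tr((A ⊗ I) X)| / ‖A‖_op = Σᵢ |λᵢ(Y)|`. -/
theorem stmt3 (m n : ℕ) (hm : 1 ≤ m) (hn : 1 ≤ n)
    (X : Matrix (Fin m × Fin n) (Fin m × Fin n) ℂ) (hX : X.IsHermitian)
    (Y : Matrix (Fin m) (Fin m) ℂ)
    (hY : ∀ i j, Y i j = ∑ k : Fin n, X (i, k) (j, k)) :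
    ∃ hHerm : Y.IsHermitian,
      sSup {r : ℝ | ∃ A : Matrix (Fin m) (Fin m) ℂ, A.IsHermitian ∧ A ≠ 0 ∧
          r = ‖((A ⊗ₖ (1 : Matrix (Fin n) (Fin n) ℂ)) * X).trace‖ /
              ‖Matrix.toEuclideanCLM (𝕜 := ℂ) A‖}
        = ∑ i, |hHerm.eigenvalues i| := by
  have hHerm : Y.IsHermitian := by
    refine Matrix.IsHermitian.ext fun i j => ?_
    rw [hY, hY, star_sum]
    exact Finset.sum_congr rfl fun k _ => hX.apply _ _
  refine ⟨hHerm, ?_⟩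
  have hsetEq : {r : ℝ | ∃ A : Matrix (Fin m) (Fin m) ℂ, A.IsHermitian ∧ A ≠ 0 ∧
          r = ‖((A ⊗ₖ (1 : Matrix (Fin n) (Fin n) ℂ)) * X).trace‖ /
              ‖Matrix.toEuclideanCLM (𝕜 := ℂ) A‖}
      = {r : ℝ | ∃ A : Matrix (Fin m) (Fin m) ℂ, A.IsHermitian ∧ A ≠ 0 ∧
          r = ‖(A * Y).trace‖ / ‖Matrix.toEuclideanCLM (𝕜 := ℂ) A‖} := by
    ext r
    constructor
    · rintro ⟨A, h1, h2, rfl⟩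
      exact ⟨A, h1, h2, by rw [trace_kron_eq m n X Y hY]⟩
    · rintro ⟨A, h1, h2, rfl⟩
      exact ⟨A, h1, h2, by rw [trace_kron_eq m n X Y hY]⟩
  rw [hsetEq]
  refine core m hm Y hHerm.eigenvectorUnitary hHerm.eigenvalues ?_
  have := hHerm.spectral_theorem
  exact this.trans (by rw [Unitary.conjStarAlgAut_apply]; rfl)
end

section
/- Let 𝒜 be a nonempty set of nonzero Hermitian D×D complex matrices, let X be a Hermitian D×D complex matrix whose eigenvalues λ_i(X) satisfy Σ_i |λ_i(X)| ≤ 2, and let n ≥ 1 be an integer. Define F(U) = sup_{A ∈ 𝒜} |tr(A U X Uᴴ)| / ‖A‖_op. Then for all unitary D×D matrices U₁, U₂: |F(U₁)ⁿ − F(U₂)ⁿ| ≤ n · 2^{n + 1/2} · ‖U₁ − U₂‖_F. -/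
set_option maxHeartbeats 1000000
set_option synthInstance.maxHeartbeats 1000000

open Matrix

lemma dot_abs_le {D : ℕ} (A : Matrix (Fin D) (Fin D) ℂ) (x y : Fin D → ℂ) :
    ‖star x ⬝ᵥ (A *ᵥ y)‖ ≤ ‖Matrix.toEuclideanCLM (𝕜 := ℂ) A‖ *
      Real.sqrt (∑ i, Complex.normSq (x i)) * Real.sqrt (∑ i, Complex.normSq (y i)) := by
  set x' := (WithLp.equiv 2 (Fin D → ℂ)).symm x with hx'
  set y' := (WithLp.equiv 2 (Fin D → ℂ)).symm y with hy'
  have h1 : star x ⬝ᵥ (A *ᵥ y) = inner (𝕜 := ℂ) x' (Matrix.toEuclideanCLM (𝕜 := ℂ) A y') := by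
    rw [dotProduct_comm]; rfl
  have h2 : ‖x'‖ = Real.sqrt (∑ i, Complex.normSq (x i)) := by
    rw [EuclideanSpace.norm_eq]
    congr 1
    refine Finset.sum_congr rfl fun i _ => ?_
    rw [← Complex.sq_norm]
    rfl
  have h3 : ‖y'‖ = Real.sqrt (∑ i, Complex.normSq (y i)) := by
    rw [EuclideanSpace.norm_eq]
    congr 1
    refine Finset.sum_congr rfl fun i _ => ?_
    rw [← Complex.sq_norm]
    rfl
  rw [h1]
  calc ‖(inner (𝕜 := ℂ) x' (Matrix.toEuclideanCLM (𝕜 := ℂ) A y') : ℂ)‖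
      ≤ ‖x'‖ * ‖Matrix.toEuclideanCLM (𝕜 := ℂ) A y'‖ := norm_inner_le_norm _ _
    _ ≤ ‖x'‖ * (‖Matrix.toEuclideanCLM (𝕜 := ℂ) A‖ * ‖y'‖) := by
        gcongr; exact (Matrix.toEuclideanCLM (𝕜 := ℂ) A).le_opNorm y'
    _ = ‖Matrix.toEuclideanCLM (𝕜 := ℂ) A‖ * Real.sqrt (∑ i, Complex.normSq (x i)) *
        Real.sqrt (∑ i, Complex.normSq (y i)) := by rw [h2, h3]; ring

lemma trace_A_BdB {D : ℕ} (A B : Matrix (Fin D) (Fin D) ℂ) (d : Fin D → ℂ) :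
    (A * (B * Matrix.diagonal d * star B)).trace
      = ∑ i, d i * (star (fun j => B j i) ⬝ᵥ (A *ᵥ fun j => B j i)) := by
  have e1 : (A * (B * Matrix.diagonal d * star B)).trace
      = ((star B * (A * B)) * Matrix.diagonal d).trace := by
    rw [show A * (B * Matrix.diagonal d * star B) = (A * B) * Matrix.diagonal d * star B by
      simp only [Matrix.mul_assoc]]
    rw [Matrix.trace_mul_cycle (A * B) (Matrix.diagonal d) (star B), Matrix.mul_assoc]
  rw [e1]
  have e2 : ∀ M : Matrix (Fin D) (Fin D) ℂ, (M * Matrix.diagonal d).trace = ∑ i, d i * M i i := by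
    intro M
    simp only [Matrix.trace, Matrix.diag_apply, Matrix.mul_apply, Matrix.diagonal_apply]
    refine Finset.sum_congr rfl fun i _ => ?_
    rw [Finset.sum_eq_single i]
    · simp [mul_comm]
    · intro b _ hb; simp [hb, Ne.symm hb]
    · simp
  rw [e2]
  refine Finset.sum_congr rfl fun i _ => ?_
  congr 1

lemma trace_formula {D : ℕ} (A U X : Matrix (Fin D) (Fin D) ℂ) (hX : X.IsHermitian) :
    (A * U * X * Uᴴ).trace = ∑ i, (hX.eigenvalues i : ℂ) *
      (star (fun j => (U * (hX.eigenvectorUnitary : Matrix (Fin D) (Fin D) ℂ)) j i) ⬝ᵥ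
        (A *ᵥ fun j => (U * (hX.eigenvectorUnitary : Matrix (Fin D) (Fin D) ℂ)) j i)) := by
  set V : Matrix (Fin D) (Fin D) ℂ := (hX.eigenvectorUnitary : Matrix (Fin D) (Fin D) ℂ) with hV
  have e0 : A * U * X * Uᴴ
      = A * ((U * V) * Matrix.diagonal (RCLike.ofReal ∘ hX.eigenvalues) * star (U * V)) := by
    conv_lhs => rw [hX.spectral_theorem]
    rw [Matrix.star_mul, ← Matrix.star_eq_conjTranspose]
    simp only [Unitary.conjStarAlgAut_apply, Matrix.mul_assoc, hV]
  rw [e0, trace_A_BdB]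
  rfl

lemma entry_one {D : ℕ} {B : Matrix (Fin D) (Fin D) ℂ} (h : B = 1) (i : Fin D) :
    B i i = 1 := by rw [h]; simp

lemma col_dot {D : ℕ} (B C : Matrix (Fin D) (Fin D) ℂ) (i k : Fin D) :
    star (fun j => B j i) ⬝ᵥ (fun j => C j k) = (star B * C) i k := by
  simp [Matrix.mul_apply, dotProduct, Matrix.star_apply]

lemma col_normSq {D : ℕ} (B C : Matrix (Fin D) (Fin D) ℂ) (i : Fin D) :
    ((∑ j, Complex.normSq ((fun j => B j i) j - (fun j => C j i) j) : ℝ) : ℂ)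
      = (star (B - C) * (B - C)) i i := by
  rw [← col_dot (B - C) (B - C) i i]
  push_cast
  simp only [dotProduct, Pi.star_apply, Matrix.sub_apply, Complex.normSq_eq_conj_mul_self]
  rfl

lemma col_normSq_one {D : ℕ} {B : Matrix (Fin D) (Fin D) ℂ}
    (hB : B ∈ Matrix.unitaryGroup (Fin D) ℂ) (i : Fin D) :
    ∑ j, Complex.normSq (B j i) = 1 := by
  have h := entry_one (Matrix.mem_unitaryGroup_iff'.mp hB) i
  have h2 : (star B * B) i i = ((∑ j, Complex.normSq (B j i) : ℝ) : ℂ) := by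
    simp only [Matrix.mul_apply, Matrix.star_apply]
    push_cast
    refine Finset.sum_congr rfl fun j _ => ?_
    rw [Complex.normSq_eq_conj_mul_self]
    rfl
  rw [h2] at h
  exact_mod_cast h

lemma row_normSq_one {D : ℕ} {B : Matrix (Fin D) (Fin D) ℂ}
    (hB : B ∈ Matrix.unitaryGroup (Fin D) ℂ) (i : Fin D) :
    ∑ j, Complex.normSq (B i j) = 1 := by
  have h := entry_one (Matrix.mem_unitaryGroup_iff.mp hB) i
  have h2 : (B * star B) i i = ((∑ j, Complex.normSq (B i j) : ℝ) : ℂ) := by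
    simp only [Matrix.mul_apply, Matrix.star_apply]
    push_cast
    refine Finset.sum_congr rfl fun j _ => ?_
    rw [mul_comm, Complex.normSq_eq_conj_mul_self]
    rfl
  rw [h2] at h
  exact_mod_cast h

lemma key_bound {D : ℕ} (A U X : Matrix (Fin D) (Fin D) ℂ) (hX : X.IsHermitian)
    (hU : U ∈ Matrix.unitaryGroup (Fin D) ℂ) :
    ‖(A * U * X * Uᴴ).trace‖
      ≤ (∑ i, |hX.eigenvalues i|) * ‖Matrix.toEuclideanCLM (𝕜 := ℂ) A‖ := by
  set V : Matrix (Fin D) (Fin D) ℂ := (hX.eigenvectorUnitary : Matrix (Fin D) (Fin D) ℂ) with hV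
  have hUV : U * V ∈ Matrix.unitaryGroup (Fin D) ℂ := mul_mem hU hX.eigenvectorUnitary.2
  rw [trace_formula A U X hX]
  refine le_trans (norm_sum_le _ _) ?_
  rw [Finset.sum_mul]
  refine Finset.sum_le_sum fun i _ => ?_
  rw [norm_mul, Complex.norm_real, Real.norm_eq_abs]
  refine mul_le_mul_of_nonneg_left ?_ (abs_nonneg _)
  have := dot_abs_le A (fun j => (U * V) j i) (fun j => (U * V) j i)
  rw [col_normSq_one hUV i] at this
  rw [Real.sqrt_one, mul_one, mul_one] at this
  exact this

lemma dot_self_normSq {D : ℕ} (x : Fin D → ℂ) :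
    star x ⬝ᵥ x = ((∑ j, Complex.normSq (x j) : ℝ) : ℂ) := by
  push_cast
  simp only [dotProduct, Pi.star_apply, Complex.normSq_eq_conj_mul_self]
  rfl

lemma dot_conj_comm {D : ℕ} (x y : Fin D → ℂ) :
    star y ⬝ᵥ x = (starRingEnd ℂ) (star x ⬝ᵥ y) := by
  simp only [dotProduct, Pi.star_apply, map_sum, _root_.map_mul, RCLike.star_def,
    Complex.conj_conj]
  refine Finset.sum_congr rfl fun j _ => mul_comm _ _

lemma smul_dot_left {D : ℕ} (κ : ℂ) (x y : Fin D → ℂ) :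
    star (fun j => κ * x j) ⬝ᵥ y = (starRingEnd ℂ) κ * (star x ⬝ᵥ y) := by
  simp only [dotProduct, Pi.star_apply, RCLike.star_def, _root_.map_mul, Finset.mul_sum]
  refine Finset.sum_congr rfl fun j _ => by ring

lemma smul_dot_right {D : ℕ} (κ : ℂ) (x y : Fin D → ℂ) :
    star x ⬝ᵥ (fun j => κ * y j) = κ * (star x ⬝ᵥ y) := by
  simp only [dotProduct, Pi.star_apply, Finset.mul_sum]
  refine Finset.sum_congr rfl fun j _ => by ring

lemma smul_mulVec {D : ℕ} (A : Matrix (Fin D) (Fin D) ℂ) (κ : ℂ) (y : Fin D → ℂ) :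
    A *ᵥ (fun j => κ * y j) = fun j => κ * (A *ᵥ y) j := by
  funext j
  simp only [Matrix.mulVec, dotProduct, Finset.mul_sum]
  refine Finset.sum_congr rfl fun k _ => by ring

lemma star_mem_UG {D : ℕ} {B : Matrix (Fin D) (Fin D) ℂ}
    (h : B ∈ Matrix.unitaryGroup (Fin D) ℂ) : star B ∈ Matrix.unitaryGroup (Fin D) ℂ := by
  rw [Matrix.mem_unitaryGroup_iff', star_star]
  exact Matrix.mem_unitaryGroup_iff.mp h

lemma tdiff_lemma {D : ℕ} (B₁ B₂ : Matrix (Fin D) (Fin D) ℂ)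
    (h₁ : star B₁ * B₁ = 1) (h₂ : star B₂ * B₂ = 1) (i : Fin D) :
    2 * (1 - ‖(star B₁ * B₂) i i‖) ≤ ∑ j, Complex.normSq ((B₁ - B₂) j i) := by
  have e1 : ((∑ j, Complex.normSq ((B₁ - B₂) j i) : ℝ) : ℂ)
      = (star (B₁ - B₂) * (B₁ - B₂)) i i := by
    have := col_normSq B₁ B₂ i
    simpa using this
  have e2 : star (B₁ - B₂) * (B₁ - B₂)
      = star B₁ * B₁ - star B₁ * B₂ - star B₂ * B₁ + star B₂ * B₂ := by
    rw [star_sub, Matrix.sub_mul, Matrix.mul_sub, Matrix.mul_sub]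
    abel
  have hsPB : star B₂ * B₁ = star (star B₁ * B₂) := by
    rw [Matrix.star_mul, star_star]
  have e3 : (star B₁ * B₁ - star B₁ * B₂ - star B₂ * B₁ + star B₂ * B₂) i i
      = 1 - (star B₁ * B₂) i i - (starRingEnd ℂ) ((star B₁ * B₂) i i) + 1 := by
    rw [hsPB, h₁, h₂]
    simp only [Matrix.add_apply, Matrix.sub_apply, Matrix.star_apply, Matrix.one_apply_eq,
      RCLike.star_def]
  have e4 : (∑ j, Complex.normSq ((B₁ - B₂) j i)) = 2 - 2 * ((star B₁ * B₂) i i).re := by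
    have h := e1
    rw [e2, e3] at h
    have h2 := congrArg Complex.re h
    simp only [Complex.ofReal_re, Complex.sub_re, Complex.add_re, Complex.one_re,
      Complex.conj_re] at h2
    linarith
  have hre : ((star B₁ * B₂) i i).re ≤ ‖(star B₁ * B₂) i i‖ := Complex.re_le_norm _
  rw [e4]
  linarith

lemma peri (A : Matrix (Fin D) (Fin D) ℂ) (a b : Fin D → ℂ)
    (ha : star a ⬝ᵥ a = 1) (hb : star b ⬝ᵥ b = 1) :
    ‖star a ⬝ᵥ (A *ᵥ a) - star b ⬝ᵥ (A *ᵥ b)‖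
      ≤ ‖Matrix.toEuclideanCLM (𝕜 := ℂ) A‖ *
        (2 * Real.sqrt (1 - ‖star a ⬝ᵥ b‖ ^ 2)) := by
  set K : ℝ := ‖Matrix.toEuclideanCLM (𝕜 := ℂ) A‖ with hK
  have hK0 : 0 ≤ K := norm_nonneg _
  set z : ℂ := star a ⬝ᵥ b with hz
  set c : ℝ := ‖z‖ with hcdef
  have hc0 : 0 ≤ c := norm_nonneg _
  set κ : ℂ := if z = 0 then 1 else (starRingEnd ℂ) z / (c : ℂ) with hκdef
  have hκ : (starRingEnd ℂ) κ * κ = 1 := by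
    by_cases hzz : z = 0
    · simp [hκdef, hzz]
    · have hcne : (c : ℂ) ≠ 0 := by
        simp only [hcdef, ne_eq, Complex.ofReal_eq_zero]
        exact fun h => hzz (norm_eq_zero.mp h)
      simp only [hκdef, if_neg hzz, map_div₀, Complex.conj_conj, Complex.conj_ofReal]
      rw [div_mul_div_comm, Complex.mul_conj]
      have hcc : (c : ℂ) * c = (Complex.normSq z : ℂ) := by
        rw [← Complex.ofReal_mul]
        norm_cast
        rw [← Complex.sq_norm]
        ring
      rw [hcc]
      exact div_self (by
        simp only [ne_eq, Complex.ofReal_eq_zero]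
        exact fun h => hzz (Complex.normSq_eq_zero.mp h))
  -- the phase-adjusted vector
  set b' : Fin D → ℂ := fun j => κ * b j with hb'def
  have d1 : star a ⬝ᵥ b' = (c : ℂ) := by
    rw [hb'def, smul_dot_right, ← hz]
    by_cases hzz : z = 0
    · simp [hκdef, hzz, hcdef]
    · have hcne : (c : ℂ) ≠ 0 := by
        simp only [hcdef, ne_eq, Complex.ofReal_eq_zero]
        exact fun h => hzz (norm_eq_zero.mp h)
      rw [hκdef, if_neg hzz, div_mul_eq_mul_div, mul_comm, Complex.mul_conj]
      rw [show (Complex.normSq z : ℂ) = (c:ℂ) * c by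
        rw [← Complex.ofReal_mul]; norm_cast; rw [← Complex.sq_norm]; ring]
      field_simp
  have d2 : star b' ⬝ᵥ a = (c : ℂ) := by
    rw [dot_conj_comm, d1, Complex.conj_ofReal]
  have d3 : star b' ⬝ᵥ b' = 1 := by
    rw [hb'def, smul_dot_left, smul_dot_right, hb]
    rw [mul_one, hκ]
  have d4 : star b' ⬝ᵥ (A *ᵥ b') = star b ⬝ᵥ (A *ᵥ b) := by
    rw [hb'def, _root_.smul_mulVec, smul_dot_left, smul_dot_right, ← mul_assoc, hκ, one_mul]
  -- squared norms of a ± b'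
  have np : ∑ j, Complex.normSq (a j + b' j) = 2 + 2 * c := by
    have h1 : star (fun j => a j + b' j) ⬝ᵥ (fun j => a j + b' j)
        = ((∑ j, Complex.normSq (a j + b' j) : ℝ) : ℂ) := dot_self_normSq _
    have h2 : star (fun j => a j + b' j) ⬝ᵥ (fun j => a j + b' j)
        = star a ⬝ᵥ a + star a ⬝ᵥ b' + star b' ⬝ᵥ a + star b' ⬝ᵥ b' := by
      have : (fun j => a j + b' j) = a + b' := rfl
      rw [this, star_add, add_dotProduct, dotProduct_add,
        dotProduct_add]
      ring
    rw [h2, ha, d1, d2, d3] at h1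
    have := congrArg Complex.re h1.symm
    simp only [Complex.ofReal_re, Complex.add_re, Complex.one_re] at this
    rw [this]
    ring
  have nm : ∑ j, Complex.normSq (a j - b' j) = 2 - 2 * c := by
    have h1 : star (fun j => a j - b' j) ⬝ᵥ (fun j => a j - b' j)
        = ((∑ j, Complex.normSq (a j - b' j) : ℝ) : ℂ) := dot_self_normSq _
    have h2 : star (fun j => a j - b' j) ⬝ᵥ (fun j => a j - b' j)
        = star a ⬝ᵥ a - star a ⬝ᵥ b' - star b' ⬝ᵥ a + star b' ⬝ᵥ b' := by
      have : (fun j => a j - b' j) = a - b' := rfl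
      rw [this, star_sub, sub_dotProduct, dotProduct_sub,
        dotProduct_sub]
      ring
    rw [h2, ha, d1, d2, d3] at h1
    have := congrArg Complex.re h1.symm
    simp only [Complex.ofReal_re, Complex.add_re, Complex.sub_re, Complex.one_re] at this
    rw [this]
    ring
  -- polarization-type identity
  have iden : star (a + b') ⬝ᵥ (A *ᵥ (a - b')) + star (a - b') ⬝ᵥ (A *ᵥ (a + b'))
      = 2 * (star a ⬝ᵥ (A *ᵥ a) - star b' ⬝ᵥ (A *ᵥ b')) := by
    simp only [star_add, star_sub, add_dotProduct, sub_dotProduct,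
      Matrix.mulVec_add, Matrix.mulVec_sub, dotProduct_add, dotProduct_sub]
    ring
  have t1 : ‖star (a + b') ⬝ᵥ (A *ᵥ (a - b'))‖
      ≤ K * Real.sqrt (2 + 2 * c) * Real.sqrt (2 - 2 * c) := by
    have := dot_abs_le A (a + b') (a - b')
    simpa only [Pi.add_apply, Pi.sub_apply, np, nm] using this
  have t2 : ‖star (a - b') ⬝ᵥ (A *ᵥ (a + b'))‖
      ≤ K * Real.sqrt (2 - 2 * c) * Real.sqrt (2 + 2 * c) := by
    have := dot_abs_le A (a - b') (a + b')
    simpa only [Pi.add_apply, Pi.sub_apply, np, nm] using this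
  have main : 2 * ‖star a ⬝ᵥ (A *ᵥ a) - star b ⬝ᵥ (A *ᵥ b)‖
      ≤ 2 * (K * (Real.sqrt (2 + 2 * c) * Real.sqrt (2 - 2 * c))) := by
    have e : ‖2 * (star a ⬝ᵥ (A *ᵥ a) - star b' ⬝ᵥ (A *ᵥ b'))‖
        = 2 * ‖star a ⬝ᵥ (A *ᵥ a) - star b ⬝ᵥ (A *ᵥ b)‖ := by
      rw [d4, norm_mul]
      norm_num
    rw [← e, ← iden]
    calc ‖star (a + b') ⬝ᵥ (A *ᵥ (a - b')) + star (a - b') ⬝ᵥ (A *ᵥ (a + b'))‖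
        ≤ ‖star (a + b') ⬝ᵥ (A *ᵥ (a - b'))‖
          + ‖star (a - b') ⬝ᵥ (A *ᵥ (a + b'))‖ := norm_add_le _ _
      _ ≤ K * Real.sqrt (2 + 2 * c) * Real.sqrt (2 - 2 * c)
          + K * Real.sqrt (2 - 2 * c) * Real.sqrt (2 + 2 * c) := add_le_add t1 t2
      _ = 2 * (K * (Real.sqrt (2 + 2 * c) * Real.sqrt (2 - 2 * c))) := by ring
  have hsqrt : Real.sqrt (2 + 2 * c) * Real.sqrt (2 - 2 * c) = 2 * Real.sqrt (1 - c ^ 2) := by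
    rw [← Real.sqrt_mul (by linarith)]
    rw [show (2 + 2 * c) * (2 - 2 * c) = 4 * (1 - c ^ 2) by ring]
    rw [Real.sqrt_mul (by norm_num)]
    rw [show Real.sqrt 4 = 2 by
      rw [show (4:ℝ) = 2 ^ 2 by norm_num, Real.sqrt_sq (by norm_num)]]
  rw [hsqrt] at main
  linarith

lemma key_lip {D : ℕ} (A U₁ U₂ X : Matrix (Fin D) (Fin D) ℂ) (hX : X.IsHermitian)
    (hU₁ : U₁ ∈ Matrix.unitaryGroup (Fin D) ℂ) (hU₂ : U₂ ∈ Matrix.unitaryGroup (Fin D) ℂ) :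
    ‖(A * U₁ * X * U₁ᴴ).trace - (A * U₂ * X * U₂ᴴ).trace‖
      ≤ (∑ i, |hX.eigenvalues i|) * (‖Matrix.toEuclideanCLM (𝕜 := ℂ) A‖ *
          (Real.sqrt 2 * Real.sqrt (∑ i, ∑ j, Complex.normSq ((U₁ - U₂) i j)))) := by
  set V : Matrix (Fin D) (Fin D) ℂ := (hX.eigenvectorUnitary : Matrix (Fin D) (Fin D) ℂ) with hV
  have hVmem : V ∈ Matrix.unitaryGroup (Fin D) ℂ := hX.eigenvectorUnitary.2
  set B₁ : Matrix (Fin D) (Fin D) ℂ := U₁ * V with hB₁def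
  set B₂ : Matrix (Fin D) (Fin D) ℂ := U₂ * V with hB₂def
  have hB₁ : B₁ ∈ Matrix.unitaryGroup (Fin D) ℂ := mul_mem hU₁ hVmem
  have hB₂ : B₂ ∈ Matrix.unitaryGroup (Fin D) ℂ := mul_mem hU₂ hVmem
  set K : ℝ := ‖Matrix.toEuclideanCLM (𝕜 := ℂ) A‖ with hK
  have hK0 : 0 ≤ K := norm_nonneg _
  set P : Matrix (Fin D) (Fin D) ℂ := star B₁ * B₂ with hP
  have hPmem : P ∈ Matrix.unitaryGroup (Fin D) ℂ := mul_mem (star_mem_UG hB₁) hB₂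
  set c : Fin D → ℝ := fun i => ‖P i i‖ with hc
  have hc0 : ∀ i, 0 ≤ c i := fun i => norm_nonneg _
  set s2 : ℝ := ∑ i, ∑ j, Complex.normSq ((U₁ - U₂) i j) with hs2
  -- column and row sums of P
  have colP : ∀ i, ∑ j, Complex.normSq (P j i) = 1 := col_normSq_one hPmem
  have rowP : ∀ i, ∑ j, Complex.normSq (P i j) = 1 := row_normSq_one hPmem
  -- c i ≤ 1
  have hc1 : ∀ i, c i ≤ 1 := by
    intro i
    have h1 : Complex.normSq (P i i) ≤ 1 := by
      rw [← rowP i]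
      exact Finset.single_le_sum (fun j _ => Complex.normSq_nonneg _) (Finset.mem_univ i)
    have h2 : c i ^ 2 = Complex.normSq (P i i) := Complex.sq_norm _
    nlinarith [hc0 i]
  -- key combinatorial inequality
  have hkey : ∀ i, 1 - c i ^ 2 ≤ ∑ j, (1 - c j) := by
    intro i
    have hcol : Complex.normSq (P i i) + ∑ j ∈ Finset.univ.erase i, Complex.normSq (P j i) = 1 := by
      rw [← colP i]
      exact Finset.add_sum_erase _ (fun j => Complex.normSq (P j i)) (Finset.mem_univ i)
    have hoff : ∀ j ∈ Finset.univ.erase i, Complex.normSq (P j i) ≤ 1 - c j ^ 2 := by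
      intro j hj
      have hji : i ≠ j := Ne.symm (Finset.ne_of_mem_erase hj)
      have hrow : Complex.normSq (P j j) + ∑ k ∈ Finset.univ.erase j, Complex.normSq (P j k) = 1 := by
        rw [← rowP j]
        exact Finset.add_sum_erase _ (fun k => Complex.normSq (P j k)) (Finset.mem_univ j)
      have hle : Complex.normSq (P j i) ≤ ∑ k ∈ Finset.univ.erase j, Complex.normSq (P j k) :=
        Finset.single_le_sum (fun k _ => Complex.normSq_nonneg _)
          (Finset.mem_erase.mpr ⟨hji, Finset.mem_univ i⟩)
      have : c j ^ 2 = Complex.normSq (P j j) := Complex.sq_norm _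
      linarith
    have h1 : 1 - c i ^ 2 ≤ ∑ j ∈ Finset.univ.erase i, (1 - c j ^ 2) := by
      have := Finset.sum_le_sum hoff
      have hci2 : c i ^ 2 = Complex.normSq (P i i) := Complex.sq_norm _
      linarith
    have h2 : ∀ j, 1 - c j ^ 2 ≤ 2 * (1 - c j) := by
      intro j
      nlinarith [hc0 j, hc1 j]
    have h3 : ∑ j ∈ Finset.univ.erase i, (1 - c j ^ 2)
        ≤ ∑ j ∈ Finset.univ.erase i, 2 * (1 - c j) :=
      Finset.sum_le_sum fun j _ => h2 j
    have h4 : 1 - c i ^ 2 ≤ 2 * (1 - c i) := h2 i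
    have h5 : (1 - c i) + ∑ j ∈ Finset.univ.erase i, (1 - c j) = ∑ j, (1 - c j) :=
      Finset.add_sum_erase _ (fun j => 1 - c j) (Finset.mem_univ i)
    have h6 : ∑ j ∈ Finset.univ.erase i, 2 * (1 - c j)
        = 2 * ∑ j ∈ Finset.univ.erase i, (1 - c j) := by rw [Finset.mul_sum]
    linarith
  -- Frobenius norm invariance
  have frob : ∑ i, ∑ j, Complex.normSq ((B₁ - B₂) j i) = s2 := by
    have hMV : B₁ - B₂ = (U₁ - U₂) * V := by rw [hB₁def, hB₂def, Matrix.sub_mul]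
    have hrow : ∀ j, ∑ i, Complex.normSq (((U₁ - U₂) * V) j i)
        = ∑ i, Complex.normSq ((U₁ - U₂) j i) := by
      intro j
      have e1 : (((U₁ - U₂) * V) * star ((U₁ - U₂) * V)) j j
          = ((U₁ - U₂) * star (U₁ - U₂)) j j := by
        rw [Matrix.star_mul, show (U₁ - U₂) * V * (star V * star (U₁ - U₂))
          = (U₁ - U₂) * (V * star V) * star (U₁ - U₂) by simp only [Matrix.mul_assoc],
          Matrix.mem_unitaryGroup_iff.mp hVmem, Matrix.mul_one]
      have e2 : ∀ N : Matrix (Fin D) (Fin D) ℂ, (N * star N) j j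
          = ((∑ i, Complex.normSq (N j i) : ℝ) : ℂ) := by
        intro N
        simp only [Matrix.mul_apply, Matrix.star_apply]
        push_cast
        refine Finset.sum_congr rfl fun i _ => ?_
        rw [mul_comm, Complex.normSq_eq_conj_mul_self]
        rfl
      have := e1
      rw [e2, e2] at this
      exact_mod_cast this
    rw [hMV, Finset.sum_comm]
    rw [hs2]
    exact Finset.sum_congr rfl fun j _ => hrow j
  -- column differences
  have tdiff : ∀ i, 2 * (1 - c i) ≤ ∑ j, Complex.normSq ((B₁ - B₂) j i) := fun i =>
    tdiff_lemma B₁ B₂ (Matrix.mem_unitaryGroup_iff'.mp hB₁)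
      (Matrix.mem_unitaryGroup_iff'.mp hB₂) i
  have sumc : 2 * ∑ i, (1 - c i) ≤ s2 := by
    have h1 : ∑ i, 2 * (1 - c i) ≤ ∑ i, ∑ j, Complex.normSq ((B₁ - B₂) j i) :=
      Finset.sum_le_sum fun i _ => tdiff i
    rw [frob] at h1
    rw [Finset.mul_sum]
    exact h1
  -- per-index difference bound
  have peri_bound : ∀ i,
      ‖(star fun j => B₁ j i) ⬝ᵥ (A *ᵥ fun j => B₁ j i)
        - (star fun j => B₂ j i) ⬝ᵥ (A *ᵥ fun j => B₂ j i)‖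
      ≤ K * (Real.sqrt 2 * Real.sqrt s2) := by
    intro i
    have ha : (star fun j => B₁ j i) ⬝ᵥ (fun j => B₁ j i) = 1 := by
      rw [col_dot B₁ B₁ i i, Matrix.mem_unitaryGroup_iff'.mp hB₁]
      simp
    have hbb : (star fun j => B₂ j i) ⬝ᵥ (fun j => B₂ j i) = 1 := by
      rw [col_dot B₂ B₂ i i, Matrix.mem_unitaryGroup_iff'.mp hB₂]
      simp
    have h := peri A (fun j => B₁ j i) (fun j => B₂ j i) ha hbb
    have hab : (star fun j => B₁ j i) ⬝ᵥ (fun j => B₂ j i) = P i i := col_dot B₁ B₂ i i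
    rw [hab] at h
    refine h.trans ?_
    refine mul_le_mul_of_nonneg_left ?_ hK0
    -- 2 * √(1 - c i ^ 2) ≤ √2 * √s2
    have h1 : 1 - c i ^ 2 ≤ s2 / 2 := by
      have := hkey i
      linarith [sumc]
    have h2 : Real.sqrt (1 - c i ^ 2) ≤ Real.sqrt (s2 / 2) := Real.sqrt_le_sqrt h1
    have h3 : 2 * Real.sqrt (s2 / 2) = Real.sqrt 2 * Real.sqrt s2 := by
      rw [show (2 : ℝ) * Real.sqrt (s2 / 2) = Real.sqrt 4 * Real.sqrt (s2 / 2) by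
        rw [show (4:ℝ) = 2^2 by norm_num, Real.sqrt_sq (by norm_num : (0:ℝ) ≤ 2)]]
      rw [← Real.sqrt_mul (by norm_num : (0:ℝ) ≤ 4), ← Real.sqrt_mul (by norm_num : (0:ℝ) ≤ 2)]
      congr 1
      ring
    linarith
  -- assemble
  rw [trace_formula A U₁ X hX, trace_formula A U₂ X hX, ← Finset.sum_sub_distrib]
  refine le_trans (norm_sum_le _ _) ?_
  have step : ∀ i, ‖(hX.eigenvalues i : ℂ) *
        ((star fun j => B₁ j i) ⬝ᵥ (A *ᵥ fun j => B₁ j i))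
      - (hX.eigenvalues i : ℂ) * ((star fun j => B₂ j i) ⬝ᵥ (A *ᵥ fun j => B₂ j i))‖
      ≤ |hX.eigenvalues i| * (K * (Real.sqrt 2 * Real.sqrt s2)) := by
    intro i
    rw [← mul_sub, norm_mul, Complex.norm_real, Real.norm_eq_abs]
    exact mul_le_mul_of_nonneg_left (peri_bound i) (abs_nonneg _)
  calc ∑ i, ‖(hX.eigenvalues i : ℂ) *
        ((star fun j => (U₁ * V) j i) ⬝ᵥ (A *ᵥ fun j => (U₁ * V) j i))
      - (hX.eigenvalues i : ℂ) * ((star fun j => (U₂ * V) j i) ⬝ᵥ (A *ᵥ fun j => (U₂ * V) j i))‖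
      ≤ ∑ i, |hX.eigenvalues i| * (K * (Real.sqrt 2 * Real.sqrt s2)) :=
        Finset.sum_le_sum fun i _ => step i
    _ = (∑ i, |hX.eigenvalues i|) * (K * (Real.sqrt 2 * Real.sqrt s2)) := by
        rw [← Finset.sum_mul]


lemma pow2lip (n : ℕ) : ∀ a b : ℝ, 0 ≤ a → a ≤ 2 → 0 ≤ b → b ≤ 2 →
    2 * |a ^ n - b ^ n| ≤ n * 2 ^ n * |a - b| := by
  induction n with
  | zero => intro a b _ _ _ _; simp
  | succ m ih =>
    intro a b ha0 ha2 hb0 hb2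
    have h1 : a ^ (m+1) - b ^ (m+1) = a * (a ^ m - b ^ m) + (a - b) * b ^ m := by ring
    have h2 : |a ^ (m+1) - b ^ (m+1)| ≤ a * |a ^ m - b ^ m| + |a - b| * b ^ m := by
      rw [h1]
      refine (abs_add_le _ _).trans ?_
      rw [abs_mul, abs_mul, abs_of_nonneg ha0, abs_of_nonneg (pow_nonneg hb0 m)]
    have h3 := ih a b ha0 ha2 hb0 hb2
    have hbm : b ^ m ≤ 2 ^ m := pow_le_pow_left₀ hb0 hb2 m
    have habs : 0 ≤ |a ^ m - b ^ m| := abs_nonneg _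
    have hab : 0 ≤ |a - b| := abs_nonneg _
    have h4 : a * |a ^ m - b ^ m| ≤ 2 * |a ^ m - b ^ m| := mul_le_mul_of_nonneg_right ha2 habs
    have h5 : |a - b| * b ^ m ≤ |a - b| * 2 ^ m := mul_le_mul_of_nonneg_left hbm hab
    have hcast : ((m + 1 : ℕ) : ℝ) = (m : ℝ) + 1 := by push_cast; ring
    rw [hcast]
    have hp : (2:ℝ) ^ (m+1) = 2 * 2 ^ m := by ring
    rw [hp]
    nlinarith [h2, h3, h4, h5]

/-- Lipschitz continuity of the `n`-th power of the seminorm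
`F(U) = sup_{A ∈ 𝒜} |tr(A U X Uᴴ)| / ‖A‖_op`: if every `A ∈ 𝒜` is Hermitian and
nonzero, `X` is Hermitian with trace norm `Σᵢ|λᵢ(X)| ≤ 2`, and `n ≥ 1`, then for all
unitary `U₁, U₂`, `|F(U₁)ⁿ − F(U₂)ⁿ| ≤ n · 2^{n+1/2} · ‖U₁ − U₂‖_F`. -/

theorem stmt8 (D : ℕ) (𝒜 : Set (Matrix (Fin D) (Fin D) ℂ)) (h𝒜 : 𝒜.Nonempty)
    (hA : ∀ A ∈ 𝒜, A.IsHermitian ∧ A ≠ 0)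
    (X : Matrix (Fin D) (Fin D) ℂ) (hX : X.IsHermitian)
    (hXtr : ∑ i, |hX.eigenvalues i| ≤ 2)
    (n : ℕ) (hn : 1 ≤ n)
    (F : Matrix (Fin D) (Fin D) ℂ → ℝ)
    (hF : ∀ U, F U = sSup {r : ℝ | ∃ A ∈ 𝒜,
        r = ‖(A * U * X * Uᴴ).trace‖ / ‖Matrix.toEuclideanCLM (𝕜 := ℂ) A‖})
    (U₁ U₂ : Matrix (Fin D) (Fin D) ℂ)
    (hU₁ : U₁ ∈ Matrix.unitaryGroup (Fin D) ℂ)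
    (hU₂ : U₂ ∈ Matrix.unitaryGroup (Fin D) ℂ) :
    |F U₁ ^ n - F U₂ ^ n|
      ≤ (n : ℝ) * 2 ^ ((n : ℝ) + 1 / 2) *
          Real.sqrt (∑ i, ∑ j, ‖(U₁ - U₂) i j‖ ^ 2) := by
  have hs2conv : (∑ i, ∑ j, ‖(U₁ - U₂) i j‖ ^ 2)
      = ∑ i, ∑ j, Complex.normSq ((U₁ - U₂) i j) :=
    Finset.sum_congr rfl fun i _ => Finset.sum_congr rfl fun j _ => Complex.sq_norm _
  set L : ℝ := Real.sqrt (∑ i, ∑ j, ‖(U₁ - U₂) i j‖ ^ 2) with hLdef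
  have hL0 : 0 ≤ L := Real.sqrt_nonneg _
  have hKpos : ∀ A ∈ 𝒜, 0 < ‖Matrix.toEuclideanCLM (𝕜 := ℂ) A‖ := by
    intro A hAm
    have h0 : Matrix.toEuclideanCLM (𝕜 := ℂ) A ≠ 0 := by
      intro h
      refine (hA A hAm).2 ?_
      have h2 : Matrix.toEuclideanCLM (𝕜 := ℂ) A
          = Matrix.toEuclideanCLM (𝕜 := ℂ) (0 : Matrix (Fin D) (Fin D) ℂ) := by
        rw [h, map_zero]
      exact (Matrix.toEuclideanCLM (𝕜 := ℂ)).injective h2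
    exact norm_pos_iff.mpr h0
  have elem_le : ∀ U, U ∈ Matrix.unitaryGroup (Fin D) ℂ → ∀ A ∈ 𝒜,
      ‖(A * U * X * Uᴴ).trace‖ / ‖Matrix.toEuclideanCLM (𝕜 := ℂ) A‖ ≤ 2 := by
    intro U hU A hAm
    rw [div_le_iff₀ (hKpos A hAm)]
    calc ‖(A * U * X * Uᴴ).trace‖
        ≤ (∑ i, |hX.eigenvalues i|) * ‖Matrix.toEuclideanCLM (𝕜 := ℂ) A‖ :=
          key_bound A U X hX hU
      _ ≤ 2 * ‖Matrix.toEuclideanCLM (𝕜 := ℂ) A‖ :=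
          mul_le_mul_of_nonneg_right hXtr (norm_nonneg _)
  have elem_lip : ∀ A ∈ 𝒜,
      |‖(A * U₁ * X * U₁ᴴ).trace‖ / ‖Matrix.toEuclideanCLM (𝕜 := ℂ) A‖
        - ‖(A * U₂ * X * U₂ᴴ).trace‖ / ‖Matrix.toEuclideanCLM (𝕜 := ℂ) A‖|
      ≤ 2 * (Real.sqrt 2 * L) := by
    intro A hAm
    have hK := hKpos A hAm
    rw [div_sub_div_same, abs_div, abs_of_pos hK, div_le_iff₀ hK]
    have h1 : |‖(A * U₁ * X * U₁ᴴ).trace‖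
          - ‖(A * U₂ * X * U₂ᴴ).trace‖|
        ≤ ‖(A * U₁ * X * U₁ᴴ).trace - (A * U₂ * X * U₂ᴴ).trace‖ :=
      abs_norm_sub_norm_le _ _
    have h2 := key_lip A U₁ U₂ X hX hU₁ hU₂
    have h3 : Real.sqrt (∑ i, ∑ j, Complex.normSq ((U₁ - U₂) i j)) = L := by
      rw [hLdef, hs2conv]
    rw [h3] at h2
    have h4 : (0:ℝ) ≤ ‖Matrix.toEuclideanCLM (𝕜 := ℂ) A‖ * (Real.sqrt 2 * L) :=
      mul_nonneg (norm_nonneg _) (mul_nonneg (Real.sqrt_nonneg _) hL0)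
    calc |‖(A * U₁ * X * U₁ᴴ).trace‖ - ‖(A * U₂ * X * U₂ᴴ).trace‖|
        ≤ ‖(A * U₁ * X * U₁ᴴ).trace - (A * U₂ * X * U₂ᴴ).trace‖ := h1
      _ ≤ (∑ i, |hX.eigenvalues i|) * (‖Matrix.toEuclideanCLM (𝕜 := ℂ) A‖
            * (Real.sqrt 2 * L)) := h2
      _ ≤ 2 * (‖Matrix.toEuclideanCLM (𝕜 := ℂ) A‖ * (Real.sqrt 2 * L)) :=
          mul_le_mul_of_nonneg_right hXtr h4
      _ = 2 * (Real.sqrt 2 * L) * ‖Matrix.toEuclideanCLM (𝕜 := ℂ) A‖ := by ring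
  obtain ⟨A₀, hA₀⟩ := h𝒜
  have hmem : ∀ U A, A ∈ 𝒜 →
      ‖(A * U * X * Uᴴ).trace‖ / ‖Matrix.toEuclideanCLM (𝕜 := ℂ) A‖
        ∈ {r : ℝ | ∃ A ∈ 𝒜,
          r = ‖(A * U * X * Uᴴ).trace‖ / ‖Matrix.toEuclideanCLM (𝕜 := ℂ) A‖} :=
    fun U A hAm => ⟨A, hAm, rfl⟩
  have hne : ∀ U, {r : ℝ | ∃ A ∈ 𝒜,
      r = ‖(A * U * X * Uᴴ).trace‖
        / ‖Matrix.toEuclideanCLM (𝕜 := ℂ) A‖}.Nonempty :=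
    fun U => ⟨_, hmem U A₀ hA₀⟩
  have hbdd : ∀ U, U ∈ Matrix.unitaryGroup (Fin D) ℂ → BddAbove {r : ℝ | ∃ A ∈ 𝒜,
      r = ‖(A * U * X * Uᴴ).trace‖ / ‖Matrix.toEuclideanCLM (𝕜 := ℂ) A‖} := by
    intro U hU
    refine ⟨2, fun r hr => ?_⟩
    obtain ⟨A, hAm, rfl⟩ := hr
    exact elem_le U hU A hAm
  have hFle : ∀ U, U ∈ Matrix.unitaryGroup (Fin D) ℂ → F U ≤ 2 := by
    intro U hU
    rw [hF U]
    refine csSup_le (hne U) fun r hr => ?_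
    obtain ⟨A, hAm, rfl⟩ := hr
    exact elem_le U hU A hAm
  have hF0 : ∀ U, U ∈ Matrix.unitaryGroup (Fin D) ℂ → 0 ≤ F U := by
    intro U hU
    rw [hF U]
    exact le_csSup_of_le (hbdd U hU) (hmem U A₀ hA₀)
      (div_nonneg (norm_nonneg _) (norm_nonneg _))
  have hlip : |F U₁ - F U₂| ≤ 2 * (Real.sqrt 2 * L) := by
    rw [abs_sub_le_iff]
    constructor
    · rw [hF U₁, hF U₂, sub_le_iff_le_add]
      refine csSup_le (hne U₁) fun r hr => ?_
      obtain ⟨A, hAm, rfl⟩ := hr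
      have h1 := elem_lip A hAm
      have h2 : ‖(A * U₂ * X * U₂ᴴ).trace‖
            / ‖Matrix.toEuclideanCLM (𝕜 := ℂ) A‖
          ≤ sSup {r : ℝ | ∃ A ∈ 𝒜, r = ‖(A * U₂ * X * U₂ᴴ).trace‖
            / ‖Matrix.toEuclideanCLM (𝕜 := ℂ) A‖} :=
        le_csSup (hbdd U₂ hU₂) (hmem U₂ A hAm)
      have h3 := abs_le.mp h1
      linarith [h3.2]
    · rw [hF U₁, hF U₂, sub_le_iff_le_add]
      refine csSup_le (hne U₂) fun r hr => ?_
      obtain ⟨A, hAm, rfl⟩ := hr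
      have h1 := elem_lip A hAm
      have h2 : ‖(A * U₁ * X * U₁ᴴ).trace‖
            / ‖Matrix.toEuclideanCLM (𝕜 := ℂ) A‖
          ≤ sSup {r : ℝ | ∃ A ∈ 𝒜, r = ‖(A * U₁ * X * U₁ᴴ).trace‖
            / ‖Matrix.toEuclideanCLM (𝕜 := ℂ) A‖} :=
        le_csSup (hbdd U₁ hU₁) (hmem U₁ A hAm)
      have h3 := abs_le.mp h1
      linarith [h3.1]
  have hp := pow2lip n (F U₁) (F U₂) (hF0 U₁ hU₁) (hFle U₁ hU₁) (hF0 U₂ hU₂) (hFle U₂ hU₂)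
  have h2pow : (2:ℝ) ^ ((n:ℝ) + 1/2) = 2 ^ n * Real.sqrt 2 := by
    rw [Real.rpow_add (by norm_num : (0:ℝ) < 2), Real.rpow_natCast]
    congr 1
    rw [Real.sqrt_eq_rpow]
  rw [h2pow]
  have hn2 : (0:ℝ) ≤ (n:ℝ) * 2 ^ n := by positivity
  have hmul := mul_le_mul_of_nonneg_left hlip hn2
  nlinarith [hp, hmul, hL0, Real.sqrt_nonneg 2]
end

section
/- Let d ≥ 2 be an integer and define G_d(x) = H(x) + x·log(d² − 1) − log d for x ∈ [0,1]. Then: (a) G_d is strictly increasing on the interval [0, 1 − 1/d²]; (b) G_d(0) = −log d < 0; (c) G_d(1/2) = (1/2)·log(4(1 − 1/d²)) > 0. Consequently there exists a unique α* ∈ (0, 1/2) with G_d(α*) = 0, and G_d(x) < 0 for all x ∈ (0, α*). -/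
/-- Properties of `G_d(x) = H(x) + x log(d²−1) − log d` for integer `d ≥ 2`, where `H`
is the binary entropy: `G_d` is strictly increasing on `[0, 1 − 1/d²]`,
`G_d(0) = −log d < 0`, `G_d(1/2) = (1/2) log(4(1 − 1/d²)) > 0`; consequently `G_d` has
a unique root `α* ∈ (0, 1/2)` and `G_d < 0` on `(0, α*)`. -/
theorem stmt10 (d : ℕ) (hd : 2 ≤ d)
    (H : ℝ → ℝ) (hH : ∀ x, H x = -x * Real.log x - (1 - x) * Real.log (1 - x))
    (G : ℝ → ℝ) (hG : ∀ x, G x = H x + x * Real.log ((d : ℝ) ^ 2 - 1) - Real.log d) :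
    StrictMonoOn G (Set.Icc 0 (1 - 1 / (d : ℝ) ^ 2)) ∧
    G 0 = -Real.log d ∧ G 0 < 0 ∧
    G (1 / 2) = (1 / 2) * Real.log (4 * (1 - 1 / (d : ℝ) ^ 2)) ∧ 0 < G (1 / 2) ∧
    (∃! a : ℝ, a ∈ Set.Ioo (0 : ℝ) (1 / 2) ∧ G a = 0) ∧
    (∀ a ∈ Set.Ioo (0 : ℝ) (1 / 2), G a = 0 → ∀ x ∈ Set.Ioo 0 a, G x < 0) := by
  have hd2 : (2:ℝ) ≤ (d:ℝ) := by exact_mod_cast hd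
  have hdpos : (0:ℝ) < d := by linarith
  have hd2sq : (4:ℝ) ≤ (d:ℝ)^2 := by nlinarith
  have hq : ∀ x, G x = Real.qaryEntropy (d^2) x - Real.log d := by
    intro x
    rw [hG, hH]
    unfold Real.qaryEntropy Real.binEntropy
    rw [Real.log_inv, Real.log_inv]
    have : ((((d^2 : ℕ) : ℤ) - 1 : ℤ) : ℝ) = (d:ℝ)^2 - 1 := by push_cast; ring
    rw [this]
    ring
  have hGeq : G = fun x => Real.qaryEntropy (d^2) x - Real.log d := funext hq
  have hsub : Set.Icc (0:ℝ) (1/2) ⊆ Set.Icc 0 (1 - 1/(d:ℝ)^2) := by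
    apply Set.Icc_subset_Icc le_rfl
    have : 1/(d:ℝ)^2 ≤ 1/4 := by
      apply div_le_div_of_nonneg_left <;> nlinarith
    linarith
  have hmono : StrictMonoOn G (Set.Icc 0 (1 - 1 / (d : ℝ) ^ 2)) := by
    have h2 : 2 ≤ d^2 := by nlinarith
    have := Real.qaryEntropy_strictMonoOn h2 (q := d^2)
    have hcast : ((d^2 : ℕ) : ℝ) = (d:ℝ)^2 := by push_cast; ring
    rw [hGeq]
    intro x hx y hy hxy
    simp only [sub_lt_sub_iff_right]
    exact this (by rwa [hcast]) (by rwa [hcast]) hxy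
  have hG0 : G 0 = -Real.log d := by rw [hq]; simp
  have hlogd : 0 < Real.log d := Real.log_pos (by linarith)
  have hG0neg : G 0 < 0 := by rw [hG0]; linarith
  have hd2pos : (0:ℝ) < (d:ℝ)^2 := by positivity
  have hGhalf : G (1/2) = (1/2) * Real.log (4 * (1 - 1/(d:ℝ)^2)) := by
    rw [hq]
    unfold Real.qaryEntropy
    have h1 : ((((d^2 : ℕ) : ℤ) - 1 : ℤ) : ℝ) = (d:ℝ)^2 - 1 := by push_cast; ring
    rw [h1]
    have hb : Real.binEntropy (1/2) = Real.log 2 := by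
      rw [one_div]; exact Real.binEntropy_two_inv
    rw [hb]
    have h4 : (4:ℝ) * (1 - 1/(d:ℝ)^2) = 4 * (((d:ℝ)^2 - 1) / (d:ℝ)^2) := by
      field_simp
    rw [h4, Real.log_mul (by norm_num) (div_pos (by nlinarith) hd2pos).ne', Real.log_div (by nlinarith) (by positivity),
      Real.log_pow]
    have h42 : Real.log 4 = 2 * Real.log 2 := by
      rw [show (4:ℝ) = 2^2 by norm_num, Real.log_pow]; push_cast; ring
    rw [h42]
    push_cast
    ring
  have hGhalfpos : 0 < G (1/2) := by
    rw [hGhalf]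
    have : (1:ℝ) < 4 * (1 - 1/(d:ℝ)^2) := by
      have : 1/(d:ℝ)^2 ≤ 1/4 := by apply div_le_div_of_nonneg_left <;> nlinarith
      linarith
    have := Real.log_pos this
    linarith
  have hcont : ContinuousOn G (Set.Icc (0:ℝ) (1/2)) := by
    rw [hGeq]
    exact ((Real.qaryEntropy_continuous.sub continuous_const).continuousOn)
  have hmono' : StrictMonoOn G (Set.Icc (0:ℝ) (1/2)) := hmono.mono hsub
  obtain ⟨a, ha, hGa⟩ := intermediate_value_Icc (by norm_num : (0:ℝ) ≤ 1/2) hcont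
    (Set.mem_Icc.mpr ⟨hG0neg.le, hGhalfpos.le⟩)
  have ha0 : a ≠ 0 := by rintro rfl; rw [hGa] at hG0neg; exact lt_irrefl 0 hG0neg
  have ha1 : a ≠ 1/2 := by rintro rfl; rw [hGa] at hGhalfpos; exact lt_irrefl 0 hGhalfpos
  have haI : a ∈ Set.Ioo (0:ℝ) (1/2) := ⟨lt_of_le_of_ne ha.1 (Ne.symm ha0), lt_of_le_of_ne ha.2 ha1⟩
  refine ⟨hmono, hG0, hG0neg, hGhalf, hGhalfpos, ⟨a, ⟨haI, hGa⟩, ?_⟩, ?_⟩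
  · rintro b ⟨hbI, hGb⟩
    exact hmono'.injOn (Set.Ioo_subset_Icc_self hbI) (Set.Ioo_subset_Icc_self haI)
      (hGb.trans hGa.symm)
  · intro b hbI hGb x hx
    have hxI : x ∈ Set.Icc (0:ℝ) (1/2) := ⟨hx.1.le, by linarith [hx.2, hbI.2]⟩
    have := hmono' hxI (Set.Ioo_subset_Icc_self hbI) hx.2
    linarith
end

section
/- For each integer d ≥ 2 let α*(d) ∈ (0, 1/2) be the unique root of G_d(x) = H(x) + x·log(d² − 1) − log d in (0, 1/2). Then α* is strictly increasing in d (i.e., 2 ≤ d₁ < d₂ implies α*(d₁) < α*(d₂)), and α*(d) → 1/2 as d → ∞. -/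
open Real

lemma hasDerivAt_Hent {x : ℝ} (hx0 : x ≠ 0) (hx1 : x ≠ 1) :
    HasDerivAt (fun x : ℝ => -x * Real.log x - (1 - x) * Real.log (1 - x))
      (Real.log (1 - x) - Real.log x) x := by
  have h1 : HasDerivAt (fun x : ℝ => x * Real.log x) (Real.log x + 1) x :=
    Real.hasDerivAt_mul_log hx0
  have hinner : HasDerivAt (fun x : ℝ => 1 - x) (-1) x := (hasDerivAt_id x).const_sub 1
  have h2 : HasDerivAt (fun x : ℝ => (1 - x) * Real.log (1 - x))
      ((Real.log (1 - x) + 1) * (-1)) x :=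
    (Real.hasDerivAt_mul_log (sub_ne_zero.mpr (Ne.symm hx1))).comp x hinner
  have h3 := (h1.neg).sub h2
  refine (h3.congr_of_eventuallyEq (Filter.Eventually.of_forall fun y => ?_)).congr_deriv (by ring)
  simp only [Pi.sub_apply, Pi.neg_apply]; ring

lemma monoAux (L : ℝ) (hL : Real.log 3 ≤ L) :
    StrictMonoOn (fun x : ℝ => -x * Real.log x - (1 - x) * Real.log (1 - x) + x * L)
      (Set.Ioo 0 (3/4)) := by
  have hder : ∀ x ∈ Set.Ioo (0:ℝ) (3/4),
      HasDerivAt (fun x : ℝ => -x * Real.log x - (1 - x) * Real.log (1 - x) + x * L)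
        (Real.log (1 - x) - Real.log x + L) x := by
    intro x hx
    exact (hasDerivAt_Hent (ne_of_gt hx.1) (by nlinarith [hx.2])).add (hasDerivAt_mul_const L)
  apply strictMonoOn_of_deriv_pos (convex_Ioo _ _)
  · intro x hx
    exact ((hder x hx).continuousAt).continuousWithinAt
  · rw [interior_Ioo]
    intro x hx
    rw [(hder x hx).deriv]
    have h13 : x / 3 < 1 - x := by nlinarith [hx.1, hx.2]
    have hx3 : (0:ℝ) < x / 3 := by linarith [hx.1]
    have := Real.log_lt_log hx3 h13
    rw [Real.log_div (ne_of_gt hx.1) (by norm_num)] at this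
    linarith

lemma antAux :
    AntitoneOn (fun x : ℝ => -x * Real.log x - (1 - x) * Real.log (1 - x) - x * Real.log 3)
      (Set.Icc (1/4) (1/2)) := by
  have hder : ∀ x ∈ Set.Icc (1/4:ℝ) (1/2),
      HasDerivAt (fun x : ℝ => -x * Real.log x - (1 - x) * Real.log (1 - x) - x * Real.log 3)
        (Real.log (1 - x) - Real.log x - Real.log 3) x := by
    intro x hx
    exact (hasDerivAt_Hent (by nlinarith [hx.1]) (by nlinarith [hx.2])).sub
      (hasDerivAt_mul_const _)
  apply antitoneOn_of_deriv_nonpos (convex_Icc _ _)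
  · intro x hx
    exact ((hder x hx).continuousAt).continuousWithinAt
  · rw [interior_Icc]
    intro x hx
    exact ((hder x ⟨hx.1.le, hx.2.le⟩).differentiableAt).differentiableWithinAt
  · rw [interior_Icc]
    intro x hx
    rw [(hder x ⟨hx.1.le, hx.2.le⟩).deriv]
    have h13 : 1 - x ≤ 3 * x := by linarith [hx.1]
    have hx0 : (0:ℝ) < 1 - x := by linarith [hx.2]
    have := Real.log_le_log hx0 h13
    rw [Real.log_mul (by norm_num) (by nlinarith [hx.1])] at this
    linarith

lemma Qd : ∀ d : ℕ, 3 ≤ d → 2 + 3 * Real.log d ≤ 4 * ((d:ℝ) - 1) * Real.log 2 := by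
  intro d hd
  induction d, hd using Nat.le_induction with
  | base =>
    have h1 : Real.exp 2 ≤ 256 / 27 := by
      have he := Real.exp_one_lt_d9
      have h2 : Real.exp 2 = Real.exp 1 * Real.exp 1 := by
        rw [← Real.exp_add]; norm_num
      nlinarith [Real.exp_pos 1]
    have h2 : (2:ℝ) ≤ Real.log (256 / 27) := (Real.le_log_iff_exp_le (by norm_num)).2 h1
    have h3 : Real.log (256 / 27) = 8 * Real.log 2 - 3 * Real.log 3 := by
      rw [show (256:ℝ)/27 = 2^8 / 3^3 by norm_num,
        Real.log_div (by positivity) (by positivity), Real.log_pow, Real.log_pow]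
      push_cast; ring
    push_cast
    rw [h3] at h2
    linarith
  | succ d hd ih =>
    have hd0 : (0:ℝ) < d := by positivity
    have hd3 : (3:ℝ) ≤ d := by exact_mod_cast hd
    have hlog : Real.log ((d:ℝ) + 1) - Real.log d ≤ 1 / (d:ℝ) := by
      rw [← Real.log_div (by positivity) (by positivity)]
      have := Real.log_le_sub_one_of_pos (show (0:ℝ) < ((d:ℝ)+1)/d by positivity)
      have heq : ((d:ℝ)+1)/d - 1 = 1/(d:ℝ) := by field_simp; ring
      linarith
    have h13 : 1/(d:ℝ) ≤ 1/3 := by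
      apply one_div_le_one_div_of_le <;> linarith
    have hl2 := Real.log_two_gt_d9
    push_cast
    push_cast at ih
    nlinarith

set_option maxHeartbeats 1600000 in
/-- Monotonicity and limit of the ETH threshold for spin systems: if for each `d ≥ 2`,
`α d ∈ (0, 1/2)` is a root of `G_d(x) = H(x) + x log(d²−1) − log d`, then `α` is
strictly increasing in `d` and `α d → 1/2` as `d → ∞`. -/
theorem stmt12
    (H : ℝ → ℝ) (hH : ∀ x, H x = -x * Real.log x - (1 - x) * Real.log (1 - x))
    (G : ℕ → ℝ → ℝ)
    (hG : ∀ (d : ℕ) (x : ℝ), G d x = H x + x * Real.log ((d : ℝ) ^ 2 - 1) - Real.log d)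
    (α : ℕ → ℝ)
    (hα : ∀ d, 2 ≤ d → α d ∈ Set.Ioo (0 : ℝ) (1 / 2) ∧ G d (α d) = 0) :
    (∀ d₁ d₂ : ℕ, 2 ≤ d₁ → d₁ < d₂ → α d₁ < α d₂) ∧
    Filter.Tendsto α Filter.atTop (nhds (1 / 2)) := by
  -- basic facts
  have hsq : ∀ d : ℕ, 2 ≤ d → (0:ℝ) < (d:ℝ)^2 - 1 := by
    intro d hd
    have : (2:ℝ) ≤ d := by exact_mod_cast hd
    nlinarith
  have hL3 : ∀ d : ℕ, 2 ≤ d → Real.log 3 ≤ Real.log ((d:ℝ)^2 - 1) := by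
    intro d hd
    have : (2:ℝ) ≤ d := by exact_mod_cast hd
    apply Real.log_le_log (by norm_num)
    nlinarith
  have hLpos : ∀ d : ℕ, 2 ≤ d → 0 < Real.log ((d:ℝ)^2 - 1) := fun d hd =>
    lt_of_lt_of_le (Real.log_pos (by norm_num)) (hL3 d hd)
  have heq : ∀ d : ℕ, 2 ≤ d →
      H (α d) + (α d) * Real.log ((d:ℝ)^2 - 1) = Real.log d := by
    intro d hd
    have h := (hα d hd).2
    rw [hG] at h
    linarith
  -- the quantity c_d := log d - log(d²-1)/2 satisfies 0 < c_d ≤ 1/(2(d²-1))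
  have hc_pos : ∀ d : ℕ, 2 ≤ d → 0 < Real.log d - Real.log ((d:ℝ)^2 - 1)/2 := by
    intro d hd
    have h0 := hsq d hd
    have h2 : Real.log ((d:ℝ)^2 - 1) < Real.log ((d:ℝ)^2) :=
      Real.log_lt_log h0 (by linarith)
    rw [Real.log_pow] at h2
    push_cast at h2
    linarith
  have hc_le : ∀ d : ℕ, 2 ≤ d →
      Real.log d - Real.log ((d:ℝ)^2 - 1)/2 ≤ 1/(2*((d:ℝ)^2 - 1)) := by
    intro d hd
    have h0 := hsq d hd
    have hd2 : (0:ℝ) < (d:ℝ)^2 := by nlinarith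
    have h1 : Real.log ((d:ℝ)^2 / ((d:ℝ)^2 - 1)) ≤ (d:ℝ)^2/((d:ℝ)^2 - 1) - 1 :=
      Real.log_le_sub_one_of_pos (by positivity)
    rw [Real.log_div (ne_of_gt hd2) (ne_of_gt h0), Real.log_pow] at h1
    have h2 : (d:ℝ)^2/((d:ℝ)^2 - 1) - 1 = 1/((d:ℝ)^2 - 1) := by field_simp; ring
    rw [h2] at h1
    push_cast at h1
    have h3 : 1/(2*((d:ℝ)^2 - 1)) = (1/((d:ℝ)^2 - 1))/2 := by
      rw [div_div, mul_comm]
    rw [h3]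
    linarith
  -- key upper bound on α d
  have keybound : ∀ d : ℕ, 2 ≤ d → 1/(4*((d:ℝ)-1)) ≤ 1/2 - α d := by
    intro d hd
    obtain ⟨⟨ha0, ha2⟩, -⟩ := hα d hd
    rcases eq_or_lt_of_le hd with hd2 | hd3
    · -- d = 2 : show α 2 ≤ 1/4
      subst hd2
      have hL2 : ((2:ℕ):ℝ)^2 - 1 = 3 := by norm_num
      have heq2 := heq 2 le_rfl
      rw [hL2] at heq2
      have hlog2 : Real.log ((2:ℕ):ℝ) = Real.log 2 := by norm_num
      rw [hlog2] at heq2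
      -- value of the auxiliary function at 1/4
      have hlog4 : Real.log (1/4 : ℝ) = -(2*Real.log 2) := by
        rw [one_div, Real.log_inv, show (4:ℝ) = 2^2 by norm_num, Real.log_pow]
        push_cast; ring
      have hlog34 : Real.log (3/4 : ℝ) = Real.log 3 - 2*Real.log 2 := by
        rw [Real.log_div (by norm_num) (by norm_num), show (4:ℝ) = 2^2 by norm_num,
          Real.log_pow]
        push_cast; ring
      have hlog3lt : Real.log 3 < 2 * Real.log 2 := by
        have := Real.log_lt_log (by norm_num : (0:ℝ) < 3) (by norm_num : (3:ℝ) < 4)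
        rw [show (4:ℝ) = 2^2 by norm_num, Real.log_pow] at this
        push_cast at this
        linarith
      by_contra hcon
      push_neg at hcon
      have hcon' : (1/4:ℝ) < α 2 := by linarith
      have hmono := monoAux (Real.log 3) le_rfl
      have hmem1 : (1/4:ℝ) ∈ Set.Ioo (0:ℝ) (3/4) := by norm_num
      have hmem2 : α 2 ∈ Set.Ioo (0:ℝ) (3/4) := ⟨ha0, by linarith⟩
      have hlt := hmono hmem1 hmem2 hcon'
      simp only at hlt
      rw [← hH (α 2), show (1:ℝ) - 1/4 = 3/4 by norm_num, hlog4, hlog34] at hlt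
      nlinarith [hlt, heq2]
    · -- d ≥ 3
      have hd3' : 3 ≤ d := hd3
      have hdr : (3:ℝ) ≤ d := by exact_mod_cast hd3'
      by_cases hb : (1/4:ℝ) ≤ 1/2 - α d
      · have h1 : 1/(4*((d:ℝ)-1)) ≤ 1/4 := by
          rw [show (1/4:ℝ) = 1/(4*1) by norm_num]
          apply one_div_le_one_div_of_le <;> nlinarith
        linarith
      · push_neg at hb
        have ha14 : (1/4:ℝ) < α d := by linarith
        set L := Real.log ((d:ℝ)^2 - 1) with hLdef
        set a := α d with hadef
        -- entropy lower bound via antitonicity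
        have hmem_a : a ∈ Set.Icc (1/4:ℝ) (1/2) := ⟨le_of_lt ha14, le_of_lt ha2⟩
        have hmem_h : (1/2:ℝ) ∈ Set.Icc (1/4:ℝ) (1/2) := by norm_num
        have hant := antAux hmem_a hmem_h (le_of_lt ha2)
        simp only at hant
        rw [← hH a, show (1:ℝ) - 1/2 = 1/2 by norm_num] at hant
        have hlog12 : Real.log (1/2:ℝ) = -Real.log 2 := by
          rw [one_div, Real.log_inv]
        rw [hlog12] at hant
        -- hant : -(1/2)*(-log 2) - (1/2)*(-log 2) - (1/2)*log 3 ≤ H a - a * log 3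
        have hHa : Real.log 2 - (1/2 - a) * Real.log 3 ≤ H a := by nlinarith [hant]
        -- the equation gives (1/2-a)*L = H a - c
        have hident : (1/2 - a) * L = H a - (Real.log d - L/2) := by
          have h := heq d hd
          rw [← hLdef, ← hadef] at h
          nlinarith [h]
        -- arithmetic inequality
        have hc1 := hc_le d hd
        rw [← hLdef] at hc1
        have hQ := Qd d hd3'
        have hL_le : L ≤ 2 * Real.log d := by
          have h2 : Real.log ((d:ℝ)^2 - 1) ≤ Real.log ((d:ℝ)^2) :=
            Real.log_le_log (hsq d hd) (by linarith)
          rw [Real.log_pow] at h2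
          push_cast at h2
          rw [hLdef]
          linarith
        have hlog3d : Real.log 3 ≤ Real.log d := Real.log_le_log (by norm_num) hdr
        have hprod : 4*((d:ℝ)-1)*(Real.log d - L/2) ≤ 1/2 := by
          have hmul := mul_le_mul_of_nonneg_left hc1 (by linarith : (0:ℝ) ≤ 4*((d:ℝ)-1))
          have hval2 : 4*((d:ℝ)-1)*(1/(2*((d:ℝ)^2-1))) ≤ 1/2 := by
            rw [mul_one_div, div_le_div_iff₀
              (by nlinarith : (0:ℝ) < 2*((d:ℝ)^2-1)) (by norm_num : (0:ℝ) < 2)]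
            nlinarith
          linarith
        have harith : L + Real.log 3 ≤ 4*((d:ℝ)-1)*(Real.log 2 - (Real.log d - L/2)) := by
          nlinarith [hQ, hL_le, hlog3d, hprod]
        -- combine
        have hLpos3 : (0:ℝ) < L + Real.log 3 := by
          have := hLpos d hd
          have h3 := Real.log_pos (by norm_num : (1:ℝ) < 3)
          rw [hLdef]; linarith
        have h1 : Real.log 2 - (Real.log d - L/2) ≤ (1/2 - a) * (L + Real.log 3) := by
          nlinarith [hHa, hident]
        have h4 : (0:ℝ) < 4*((d:ℝ)-1) := by nlinarith
        rw [div_le_iff₀ h4]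
        have hstep := mul_le_mul_of_nonneg_left h1 (le_of_lt h4)
        nlinarith [hstep, harith, hLpos3]
  -- monotonicity
  constructor
  · intro d₁ d₂ hd1 hlt
    have hd2 : 2 ≤ d₂ := le_trans hd1 (le_of_lt hlt)
    obtain ⟨⟨ha10, ha12⟩, -⟩ := hα d₁ hd1
    obtain ⟨⟨ha20, ha22⟩, -⟩ := hα d₂ hd2
    have heq1 := heq d₁ hd1
    have heq2 := heq d₂ hd2
    have hd1r : (2:ℝ) ≤ d₁ := by exact_mod_cast hd1
    have hdlt : (d₁:ℝ) < d₂ := by exact_mod_cast hlt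
    have hd1p : (0:ℝ) < d₁ := by linarith
    set L₁ := Real.log ((d₁:ℝ)^2 - 1) with hL1def
    set L₂ := Real.log ((d₂:ℝ)^2 - 1) with hL2def
    have hmpos : (0:ℝ) < Real.log d₂ - Real.log d₁ := by
      have := Real.log_lt_log hd1p hdlt
      linarith
    have hm : 1/((d₁:ℝ)+1) ≤ Real.log d₂ - Real.log d₁ := by
      have hstep : Real.log ((d₁:ℝ)+1) ≤ Real.log d₂ := by
        apply Real.log_le_log (by linarith)
        have : (d₁:ℝ) + 1 ≤ d₂ := by exact_mod_cast hlt
        linarith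
      have hlow : 1/((d₁:ℝ)+1) ≤ Real.log ((d₁:ℝ)+1) - Real.log d₁ := by
        rw [← Real.log_div (by linarith) (by linarith)]
        have h5 := Real.one_sub_inv_le_log_of_pos
          (show (0:ℝ) < ((d₁:ℝ)+1)/d₁ by positivity)
        have h6 : 1 - (((d₁:ℝ)+1)/d₁)⁻¹ = 1/((d₁:ℝ)+1) := by
          rw [inv_div]
          field_simp; ring
        rw [h6] at h5
        exact h5
      linarith
    -- Δc = c₁ - c₂ > 0
    have hci : ∀ d : ℕ, 2 ≤ d → Real.log d - Real.log ((d:ℝ)^2 - 1)/2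
        = Real.log ((d:ℝ)^2/((d:ℝ)^2 - 1))/2 := by
      intro d hd
      have h0 := hsq d hd
      have hd2' : (0:ℝ) < (d:ℝ)^2 := by nlinarith
      rw [Real.log_div (ne_of_gt hd2') (ne_of_gt h0), Real.log_pow]
      push_cast; ring
    have hΔpos : Real.log d₂ - L₂/2 < Real.log d₁ - L₁/2 := by
      rw [hL1def, hL2def, hci d₁ hd1, hci d₂ hd2]
      have h0₁ := hsq d₁ hd1
      have h0₂ := hsq d₂ hd2
      have hratio : (d₂:ℝ)^2/((d₂:ℝ)^2-1) < (d₁:ℝ)^2/((d₁:ℝ)^2-1) := by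
        rw [div_lt_div_iff₀ h0₂ h0₁]
        nlinarith
      have := Real.log_lt_log (by positivity) hratio
      linarith
    have hc2p := hc_pos d₂ hd2
    have hc1l := hc_le d₁ hd1
    rw [← hL2def] at hc2p
    rw [← hL1def] at hc1l
    have hkey1 := keybound d₁ hd1
    -- product lower bound : 1/(2(d₁²-1)) ≤ 2 β₁ m
    have hβm : 1/(2*((d₁:ℝ)^2-1)) ≤ 2*(1/2 - α d₁)*(Real.log d₂ - Real.log d₁) := by
      have hA : (0:ℝ) < 1/(4*((d₁:ℝ)-1)) := by
        apply div_pos one_pos; nlinarith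
      have hB : (0:ℝ) < 1/((d₁:ℝ)+1) := by positivity
      have hmm := mul_le_mul hkey1 hm (le_of_lt hB) (by linarith [hkey1, hA])
      have hAB : 1/(4*((d₁:ℝ)-1)) * (1/((d₁:ℝ)+1)) = 1/(4*((d₁:ℝ)^2-1)) := by
        rw [div_mul_div_comm]
        congr 1
        · ring
        · ring
      rw [hAB] at hmm
      have hhalf : 1/(2*((d₁:ℝ)^2-1)) = 2*(1/(4*((d₁:ℝ)^2-1))) := by
        rw [mul_one_div, div_eq_div_iff (by nlinarith) (by nlinarith)]
        ring
      nlinarith [hmm, hhalf]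
    -- main: α₁ (L₂ - L₁) < m
    have hΔlt : (Real.log d₁ - L₁/2) - (Real.log d₂ - L₂/2) < 1/(2*((d₁:ℝ)^2-1)) := by
      linarith
    have hΔgt : (0:ℝ) < (Real.log d₁ - L₁/2) - (Real.log d₂ - L₂/2) := by linarith
    have hkey : α d₁ * (L₂ - L₁) < Real.log d₂ - Real.log d₁ := by
      nlinarith [hΔlt, hΔgt, hβm, ha10, ha12, hmpos,
        mul_pos ha10 hΔgt]
    -- conclude via strict monotonicity of G_{d₂}
    have hGval : H (α d₁) + α d₁ * L₂ < Real.log d₂ := by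
      have : H (α d₁) = Real.log d₁ - α d₁ * L₁ := by linarith [heq1]
      rw [this]
      nlinarith [hkey]
    by_contra hcon
    push_neg at hcon
    have hmono := monoAux L₂ (by rw [hL2def]; exact hL3 d₂ hd2)
    have hmem1 : α d₂ ∈ Set.Ioo (0:ℝ) (3/4) := ⟨ha20, by linarith⟩
    have hmem2 : α d₁ ∈ Set.Ioo (0:ℝ) (3/4) := ⟨ha10, by linarith⟩
    have hle := hmono.monotoneOn hmem1 hmem2 hcon
    rw [← hH (α d₂), ← hH (α d₁)] at hle
    -- hle : H (α d₂) + α d₂ * L₂ ≤ H (α d₁) + α d₁ * L₂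
    have : Real.log d₂ ≤ H (α d₁) + α d₁ * L₂ := by linarith [heq2]
    linarith
  -- tendsto
  · have lower : ∀ d : ℕ, 2 ≤ d → 1/2 - 1/Real.log ((d:ℝ)^2-1) ≤ α d := by
      intro d hd
      obtain ⟨⟨ha0, ha2⟩, -⟩ := hα d hd
      have hL := hLpos d hd
      have hcp := hc_pos d hd
      -- H (α d) ≤ 1
      have hH1 : H (α d) ≤ 1 := by
        rw [hH]
        have h1 : 1 - (α d)⁻¹ ≤ Real.log (α d) := Real.one_sub_inv_le_log_of_pos ha0
        have h2 : 1 - (1 - α d)⁻¹ ≤ Real.log (1 - α d) :=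
          Real.one_sub_inv_le_log_of_pos (by linarith)
        have h3 : α d * (α d)⁻¹ = 1 := mul_inv_cancel₀ (ne_of_gt ha0)
        have h4 : (1 - α d) * (1 - α d)⁻¹ = 1 :=
          mul_inv_cancel₀ (by linarith : (1:ℝ) - α d ≠ 0)
        nlinarith [mul_le_mul_of_nonneg_left h1 (le_of_lt ha0),
          mul_le_mul_of_nonneg_left h2 (by linarith : (0:ℝ) ≤ 1 - α d)]
      have hident : (1/2 - α d) * Real.log ((d:ℝ)^2-1)
          = H (α d) - (Real.log d - Real.log ((d:ℝ)^2-1)/2) := by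
        have h := heq d hd
        nlinarith [h]
      have hβ : (1/2 - α d) * Real.log ((d:ℝ)^2-1) ≤ 1 := by linarith
      have : 1/2 - α d ≤ 1/Real.log ((d:ℝ)^2-1) := by
        rw [le_div_iff₀ hL]
        linarith
      linarith
    have hLtend : Filter.Tendsto (fun d : ℕ => Real.log ((d:ℝ)^2-1)) Filter.atTop
        Filter.atTop := by
      apply Real.tendsto_log_atTop.comp
      apply Filter.tendsto_atTop_add_const_right
      exact (Filter.tendsto_pow_atTop (two_ne_zero)).comp tendsto_natCast_atTop_atTop
    have h0 : Filter.Tendsto (fun d : ℕ => 1/Real.log ((d:ℝ)^2-1)) Filter.atTop (nhds 0) := by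
      simp only [one_div]
      exact hLtend.inv_tendsto_atTop
    have hg : Filter.Tendsto (fun d : ℕ => 1/2 - 1/Real.log ((d:ℝ)^2-1)) Filter.atTop
        (nhds (1/2)) := by
      have := (tendsto_const_nhds (x := (1/2:ℝ)) (f := Filter.atTop (α := ℕ))).sub h0
      simpa using this
    apply tendsto_of_tendsto_of_tendsto_of_le_of_le' hg tendsto_const_nhds
    · filter_upwards [Filter.eventually_ge_atTop 2] with d hd
      exact lower d hd
    · filter_upwards [Filter.eventually_ge_atTop 2] with d hd
      exact le_of_lt (hα d hd).1.2
end

section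
/- Let ρ > 0 and define G_ρ(α) = 2·(1 + αρ)·H(1/(1 + αρ)) − (1 + ρ)·H(1/(1 + ρ)) for α ∈ [0, 1]. Then: (a) G_ρ is strictly increasing on (0, 1]; (b) G_ρ(0) = −(1 + ρ)·H(1/(1 + ρ)) < 0; (c) G_ρ(1/2) = log((1 + ρ/2)²/(1 + ρ)) + ρ·log((2 + ρ)/(1 + ρ)) > 0. Consequently there exists a unique α* ∈ (0, 1/2) with G_ρ(α*) = 0, and G_ρ(α) < 0 for all α ∈ (0, α*). -/
/-- Properties of the Bose-system rate function
`G_ρ(α) = 2(1+αρ)H(1/(1+αρ)) − (1+ρ)H(1/(1+ρ))` for `ρ > 0`: it is strictly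
increasing on `(0,1]`, negative at `0`, positive at `1/2` with the stated explicit
values; consequently it has a unique root `α* ∈ (0, 1/2)` and is negative on
`(0, α*)`. -/
theorem stmt14 (ρ : ℝ) (hρ : 0 < ρ)
    (H : ℝ → ℝ) (hH : ∀ x, H x = -x * Real.log x - (1 - x) * Real.log (1 - x))
    (G : ℝ → ℝ)
    (hG : ∀ α, G α = 2 * (1 + α * ρ) * H (1 / (1 + α * ρ)) -
        (1 + ρ) * H (1 / (1 + ρ))) :
    StrictMonoOn G (Set.Ioc 0 1) ∧
    G 0 = -((1 + ρ) * H (1 / (1 + ρ))) ∧ G 0 < 0 ∧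
    G (1 / 2) = Real.log ((1 + ρ / 2) ^ 2 / (1 + ρ)) +
      ρ * Real.log ((2 + ρ) / (1 + ρ)) ∧ 0 < G (1 / 2) ∧
    (∃! a : ℝ, a ∈ Set.Ioo (0 : ℝ) (1 / 2) ∧ G a = 0) ∧
    (∀ a ∈ Set.Ioo (0 : ℝ) (1 / 2), G a = 0 → ∀ α ∈ Set.Ioo 0 a, G α < 0) := by
  set f : ℝ → ℝ := fun t => (1 + t) * Real.log (1 + t) - t * Real.log t with hf_def
  -- key identity
  have key : ∀ t : ℝ, 0 ≤ t → (1 + t) * H (1 / (1 + t)) = f t := by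
    intro t ht
    have h1 : (0:ℝ) < 1 + t := by linarith
    have e2 : (1 : ℝ) - 1 / (1 + t) = t / (1 + t) := by field_simp; ring
    have e1 : Real.log (1 / (1 + t)) = -Real.log (1 + t) := by
      rw [one_div, Real.log_inv]
    have e3 : Real.log (t / (1 + t)) = Real.log t - Real.log (1 + t) := by
      rcases eq_or_lt_of_le ht with h | h
      · simp [← h]
      · exact Real.log_div h.ne' h1.ne'
    rw [hH, e2, e1, e3]
    field_simp
    ring
  have hGf : ∀ α : ℝ, 0 ≤ α → G α = 2 * f (α * ρ) - f ρ := by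
    intro α hα
    rw [hG, key ρ hρ.le, mul_assoc, key (α * ρ) (by positivity)]
  -- continuity of f
  have hfc : Continuous f := by
    have h1 : Continuous fun t : ℝ => (1 + t) * Real.log (1 + t) :=
      Real.continuous_mul_log.comp (continuous_const.add continuous_id)
    exact h1.sub Real.continuous_mul_log
  -- derivative of f on Ioi 0
  have hderiv : ∀ t ∈ Set.Ioi (0:ℝ), HasDerivAt f (Real.log (1 + t) - Real.log t) t := by
    intro t ht
    have ht' : (0:ℝ) < t := ht
    have h1 : HasDerivAt (fun t : ℝ => (1 + t) * Real.log (1 + t))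
        (Real.log (1 + t) + 1) t := by
      have := (Real.hasDerivAt_mul_log (x := 1 + t) (by linarith)).comp t
        ((hasDerivAt_id t).const_add 1)
      simpa [Function.comp_def] using this
    have h2 : HasDerivAt (fun t : ℝ => t * Real.log t) (Real.log t + 1) t :=
      Real.hasDerivAt_mul_log ht'.ne'
    have := h1.sub h2
    refine this.congr_deriv ?_
    ring
  -- f strictly increasing on Ici 0
  have hmono : StrictMonoOn f (Set.Ici 0) := by
    apply strictMonoOn_of_deriv_pos (convex_Ici 0) hfc.continuousOn
    intro x hx
    rw [interior_Ici] at hx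
    rw [(hderiv x hx).deriv]
    have : Real.log x < Real.log (1 + x) := Real.log_lt_log hx (by linarith)
    linarith
  have hf0 : f 0 = 0 := by simp [hf_def]
  have hfρ : 0 < f ρ := by
    have := hmono (Set.self_mem_Ici) (Set.mem_Ici.mpr hρ.le) hρ
    rwa [hf0] at this
  -- (a) strict monotonicity of G
  have hGmono : StrictMonoOn G (Set.Ioc 0 1) := by
    intro a ha b hb hab
    rw [hGf a ha.1.le, hGf b hb.1.le]
    have : f (a * ρ) < f (b * ρ) := by
      apply hmono (mul_nonneg ha.1.le hρ.le) (mul_nonneg hb.1.le hρ.le)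
      exact mul_lt_mul_of_pos_right hab hρ
    linarith
  -- (b)
  have hG0eq : G 0 = -((1 + ρ) * H (1 / (1 + ρ))) := by
    rw [hG]
    have : H (1 / (1 + 0 * ρ)) = 0 := by
      rw [hH]; norm_num
    rw [this]; ring
  have hG0 : G 0 < 0 := by
    rw [hG0eq, key ρ hρ.le]; linarith
  -- (c)
  have hlog2ρ : Real.log (2 + ρ) = Real.log 2 + Real.log (1 + ρ / 2) := by
    rw [← Real.log_mul (by norm_num) (by linarith)]
    ring_nf
  have hGhalf : G (1 / 2) = Real.log ((1 + ρ / 2) ^ 2 / (1 + ρ)) +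
      ρ * Real.log ((2 + ρ) / (1 + ρ)) := by
    rw [hGf (1/2) (by norm_num)]
    have h12 : (1:ℝ)/2 * ρ = ρ / 2 := by ring
    rw [h12]
    have e1 : Real.log ((1 + ρ / 2) ^ 2 / (1 + ρ)) =
        2 * Real.log (1 + ρ / 2) - Real.log (1 + ρ) := by
      rw [Real.log_div (by positivity) (by linarith), Real.log_pow]
      push_cast; ring
    have e2 : Real.log ((2 + ρ) / (1 + ρ)) =
        Real.log (2 + ρ) - Real.log (1 + ρ) := Real.log_div (by linarith) (by linarith)
    have e3 : Real.log (ρ / 2) = Real.log ρ - Real.log 2 :=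
      Real.log_div hρ.ne' (by norm_num)
    simp only [hf_def]
    rw [e1, e2, e3, hlog2ρ]
    have h1p2 : (1:ℝ) + ρ / 2 = 1 + ρ/2 := rfl
    ring
  have hGhalfpos : 0 < G (1 / 2) := by
    rw [hGhalf]
    have t1 : 0 < Real.log ((1 + ρ / 2) ^ 2 / (1 + ρ)) := by
      apply Real.log_pos
      rw [lt_div_iff₀ (by linarith)]
      nlinarith
    have t2 : 0 < Real.log ((2 + ρ) / (1 + ρ)) := by
      apply Real.log_pos
      rw [lt_div_iff₀ (by linarith)]
      linarith
    positivity
  -- existence of root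
  have hGcont : ContinuousOn G (Set.Icc 0 (1/2)) := by
    have : ContinuousOn (fun α => 2 * f (α * ρ) - f ρ) (Set.Icc 0 (1/2)) := by
      apply Continuous.continuousOn
      exact (continuous_const.mul (hfc.comp (continuous_id.mul continuous_const))).sub
        continuous_const
    exact this.congr fun α hα => hGf α hα.1
  have hsub : Set.Ioo (0:ℝ) (1/2) ⊆ Set.Ioc 0 1 := fun x hx =>
    ⟨hx.1, le_trans hx.2.le (by norm_num)⟩
  have hiv : (0:ℝ) ∈ G '' Set.Ioo 0 (1/2) := by
    apply intermediate_value_Ioo (by norm_num : (0:ℝ) ≤ 1/2) hGcont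
    exact ⟨hG0, hGhalfpos⟩
  obtain ⟨a, ha, hGa⟩ := hiv
  refine ⟨hGmono, hG0eq, hG0, hGhalf, hGhalfpos, ⟨a, ⟨ha, hGa⟩, ?_⟩, ?_⟩
  · rintro b ⟨hb, hGb⟩
    exact hGmono.injOn (hsub hb) (hsub ha) (hGb.trans hGa.symm)
  · rintro b hb hGb α hα
    have hb' := hsub hb
    have hα' : α ∈ Set.Ioc (0:ℝ) 1 := ⟨hα.1, by
      have := hα.2; have := hb.2; linarith⟩
    have := hGmono hα' hb' hα.2
    rwa [hGb] at this
end

section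
/- Let ρ be a real number with 0 < ρ ≤ 1/2. Then there exists a unique α* ∈ (0, 1/2) such that 2·H(α*·ρ) = H(ρ); moreover 2·H(αρ) < H(ρ) for all α ∈ (0, α*) and 2·H(αρ) > H(ρ) for all α ∈ (α*, 1/2]. -/
/-- Fermi-system threshold: for `0 < ρ ≤ 1/2` there is a unique `α* ∈ (0, 1/2)` with
`2 H(α* ρ) = H(ρ)`; moreover `2 H(αρ) < H(ρ)` for `α ∈ (0, α*)` and
`2 H(αρ) > H(ρ)` for `α ∈ (α*, 1/2]`. -/
theorem stmt16 (ρ : ℝ) (h0 : 0 < ρ) (h1 : ρ ≤ 1 / 2)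
    (H : ℝ → ℝ) (hH : ∀ x, H x = -x * Real.log x - (1 - x) * Real.log (1 - x)) :
    (∃! a : ℝ, a ∈ Set.Ioo (0 : ℝ) (1 / 2) ∧ 2 * H (a * ρ) = H ρ) ∧
    (∀ a ∈ Set.Ioo (0 : ℝ) (1 / 2), 2 * H (a * ρ) = H ρ →
      (∀ α ∈ Set.Ioo (0 : ℝ) a, 2 * H (α * ρ) < H ρ) ∧
      (∀ α : ℝ, a < α → α ≤ 1 / 2 → H ρ < 2 * H (α * ρ))) := by
  have hHB : ∀ x, H x = Real.binEntropy x := by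
    intro x
    rw [hH x, Real.binEntropy, Real.log_inv, Real.log_inv]
    ring
  -- the function α ↦ 2 H(αρ) - H ρ
  set f : ℝ → ℝ := fun α => 2 * Real.binEntropy (α * ρ) - Real.binEntropy ρ with hf
  have hmem : ∀ x ∈ Set.Icc (0:ℝ) (1/2), x * ρ ∈ Set.Icc (0:ℝ) 2⁻¹ := by
    rintro x ⟨hx0, hx1⟩
    constructor
    · positivity
    · nlinarith
  have hmono : StrictMonoOn f (Set.Icc (0:ℝ) (1/2)) := by
    intro x hx y hy hxy
    have := Real.binEntropy_strictMonoOn (hmem x hx) (hmem y hy)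
      (by exact mul_lt_mul_of_pos_right hxy h0)
    simp only [hf]
    linarith
  have hcont : ContinuousOn f (Set.Icc (0:ℝ) (1/2)) := by
    apply ContinuousOn.sub
    · exact (continuousOn_const.mul ((Real.binEntropy_continuous.comp
        (continuous_id.mul continuous_const)).continuousOn))
    · exact continuousOn_const
  have hρ1 : ρ < 1 := lt_of_le_of_lt h1 (by norm_num)
  have hposρ : 0 < Real.binEntropy ρ := Real.binEntropy_pos h0 hρ1
  have hf0 : f 0 < 0 := by
    simp only [hf, zero_mul, Real.binEntropy_zero]
    linarith
  -- concavity : binEntropy ρ / 2 < binEntropy (ρ/2)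
  have hconc : Real.binEntropy ρ < 2 * Real.binEntropy (ρ / 2) := by
    have hc := Real.strictConcave_binEntropy.2
      (show (0:ℝ) ∈ Set.Icc (0:ℝ) 1 by constructor <;> norm_num)
      (⟨h0.le, hρ1.le⟩ : ρ ∈ Set.Icc (0:ℝ) 1) h0.ne
      (show (0:ℝ) < 1/2 by norm_num) (show (0:ℝ) < 1/2 by norm_num)
      (by norm_num)
    simp only [smul_eq_mul, mul_zero, Real.binEntropy_zero, zero_add] at hc
    rw [show (1/2:ℝ) * ρ = ρ / 2 by ring] at hc
    linarith
  have hfhalf : 0 < f (1/2) := by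
    simp only [hf]
    rw [show (1/2:ℝ) * ρ = ρ / 2 by ring]
    linarith
  -- IVT gives a root in (0, 1/2)
  obtain ⟨a, ha, hfa⟩ : ∃ a ∈ Set.Ioo (0:ℝ) (1/2), f a = 0 := by
    have := intermediate_value_Ioo (a := (0:ℝ)) (b := 1/2) (by norm_num) hcont
    have h0mem : (0:ℝ) ∈ Set.Ioo (f 0) (f (1/2)) := ⟨hf0, hfhalf⟩
    obtain ⟨a, ha, hfa⟩ := this h0mem
    exact ⟨a, ha, hfa⟩
  have key : ∀ a ∈ Set.Ioo (0:ℝ) (1/2), 2 * H (a * ρ) = H ρ →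
      (∀ α ∈ Set.Ioo (0 : ℝ) a, 2 * H (α * ρ) < H ρ) ∧
      (∀ α : ℝ, a < α → α ≤ 1 / 2 → H ρ < 2 * H (α * ρ)) := by
    intro a ha heq
    rw [hHB, hHB] at heq
    constructor
    · intro α hα
      rw [hHB, hHB]
      have := hmono ⟨hα.1.le, by linarith [hα.2, ha.2]⟩ ⟨ha.1.le, ha.2.le⟩ hα.2
      simp only [hf] at this
      linarith
    · intro α h1' h2'
      rw [hHB, hHB]
      have := hmono ⟨ha.1.le, ha.2.le⟩ ⟨by linarith [ha.1], h2'⟩ h1'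
      simp only [hf] at this
      linarith
  have haeq : 2 * H (a * ρ) = H ρ := by
    rw [hHB, hHB]; simp only [hf] at hfa; linarith
  refine ⟨⟨a, ⟨ha, haeq⟩, ?_⟩, key⟩
  rintro b ⟨hb, hbeq⟩
  by_contra hne
  rcases lt_or_gt_of_ne hne with h | h
  · exact absurd hbeq (ne_of_lt ((key a ha haeq).1 b ⟨hb.1, h⟩))
  · exact absurd hbeq (ne_of_gt ((key a ha haeq).2 b h hb.2.le))
end
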